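/- arXiv:2203.16068 — 6 statements merged into one kernel-verified Lean document; each statement's English description precedes it below -/
import Mathlib

section
/- (Proposition 3.1) If the ideal I = ker φ can be generated by m elements (i.e., M(F) is a complete intersection), then I equals the ideal J₁ ⊆ S generated by the m quadrics f^{(j)}_i. -/
open MvPolynomial

noncomputable section

/-- Index type for the variables of `S = ℂ[z_0, z_1, …, z_n, w^{(k)}_i]`:
`Sum.inl none` is `z_0`, `Sum.inl (some i)` is `z_{i+1}` for `i : Fin n`, and
`Sum.inr ⟨(k, i), _⟩` is `w^{(k)}_{i+1}` for `2 ≤ k ≤ r`, `0 ≤ i < s_k`. -/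
abbrev IdxR (n r : ℕ) (s : ℕ → ℕ) :=
  Option (Fin n) ⊕ {p : ℕ × ℕ // 2 ≤ p.1 ∧ p.1 ≤ r ∧ p.2 < s p.1}

/-- The polynomial ring `S = ℂ[z_0, z_1, …, z_n, w^{(k)}_i (2 ≤ k ≤ r, 1 ≤ i ≤ s_k)]`. -/
abbrev SR (n r : ℕ) (s : ℕ → ℕ) := MvPolynomial (IdxR n r s) ℂ

/-- The ℂ-algebra homomorphism `φ : S → ℂ[t, x_1, …, x_n]` sending `z_0 ↦ t^r`,
`z_i ↦ t^{r−1}·x_i` and `w^{(k)}_i ↦ t^{r−k}·Q^{(k)}_i(x_1, …, x_n)`; here the variable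
`none` plays the role of `t` and `some i` the role of `x_i`. -/
def phiR (n r : ℕ) (s : ℕ → ℕ) (Q : ℕ → ℕ → MvPolynomial (Fin n) ℂ) :
    SR n r s →ₐ[ℂ] MvPolynomial (Option (Fin n)) ℂ :=
  aeval (fun v : IdxR n r s => match v with
    | Sum.inl none => X none ^ r
    | Sum.inl (some i) => X none ^ (r - 1) * X (some i)
    | Sum.inr p => X none ^ (r - p.1.1) * rename some (Q p.1.1 p.1.2))

/-- The variable `w^{(k)}_{i+1}` of `S` (and `0` for out-of-range indices). -/
def WvarR (n r : ℕ) (s : ℕ → ℕ) (k i : ℕ) : SR n r s :=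
  if h : 2 ≤ k ∧ k ≤ r ∧ i < s k then X (Sum.inr ⟨(k, i), h⟩) else 0

/-- The quadrics `f^{(2)}_i = z_0·w^{(2)}_i − Q^{(2)}_i(z_1, …, z_n)` and, for `3 ≤ j ≤ r`,
`f^{(j)}_i = z_0·w^{(j)}_i − Σ_{l=1}^{s_{j−1}} g^{(j)}_{i,l}(z_1, …, z_n)·w^{(j−1)}_l`. -/
def fR (n r : ℕ) (s : ℕ → ℕ) (Q : ℕ → ℕ → MvPolynomial (Fin n) ℂ)
    (g : ℕ → ℕ → ℕ → MvPolynomial (Fin n) ℂ) (j i : ℕ) : SR n r s :=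
  X (Sum.inl none) * WvarR n r s j i -
    (if j = 2 then rename (fun a : Fin n => (Sum.inl (some a) : IdxR n r s)) (Q 2 i)
     else ∑ l ∈ Finset.range (s (j - 1)),
       rename (fun a : Fin n => (Sum.inl (some a) : IdxR n r s)) (g j i l)
         * WvarR n r s (j - 1) l)

/-- The ideal `J₁ ⊆ S` generated by the `m` quadrics `f^{(j)}_i`
(`2 ≤ j ≤ r`, `1 ≤ i ≤ s_j`). -/
def J1 (n r : ℕ) (s : ℕ → ℕ) (Q : ℕ → ℕ → MvPolynomial (Fin n) ℂ)
    (g : ℕ → ℕ → ℕ → MvPolynomial (Fin n) ℂ) : Ideal (SR n r s) :=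
  Ideal.span {p : SR n r s | ∃ j i, 2 ≤ j ∧ j ≤ r ∧ i < s j ∧ p = fR n r s Q g j i}

namespace EulerSymAux

abbrev WIdx (r : ℕ) (s : ℕ → ℕ) : Type :=
  {p : ℕ × ℕ // 2 ≤ p.1 ∧ p.1 ≤ r ∧ p.2 < s p.1}

lemma aeval_mul_homog {σ τ : Type*} {P : MvPolynomial σ ℂ} {d : ℕ} (hP : P.IsHomogeneous d)
    (c : MvPolynomial τ ℂ) (F : σ → MvPolynomial τ ℂ) :
    aeval (fun i => c * F i) P = c ^ d * aeval F P := by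
  conv_lhs => rw [← support_sum_monomial_coeff P]
  conv_rhs => rw [← support_sum_monomial_coeff P]
  rw [map_sum, map_sum, Finset.mul_sum]
  refine Finset.sum_congr rfl fun u hu => ?_
  have hdeg : u.degree = d := by
    have := hP (mem_support_iff.mp hu)
    rw [Finsupp.degree_eq_weight_one]; exact this
  rw [aeval_monomial, aeval_monomial]
  have h1 : (u.prod fun i k => (c * F i) ^ k) = c ^ d * u.prod fun i k => F i ^ k := by
    rw [Finsupp.prod, Finsupp.prod]
    simp_rw [mul_pow]
    rw [Finset.prod_mul_distrib, Finset.prod_pow_eq_pow_sum]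
    rw [← hdeg]; rfl
  rw [h1]; ring

lemma coeff_rename_zero {σ τ : Type*} (f : σ → τ) (p : MvPolynomial σ ℂ) (v : τ →₀ ℕ)
    (b : τ) (hb : b ∉ Set.range f) (h : v b ≠ 0) : coeff v (rename f p) = 0 := by
  refine coeff_rename_eq_zero _ _ _ fun u hu => absurd ?_ h
  rw [← hu]
  exact Finsupp.mapDomain_notin_range _ _ hb

lemma eq_single_of_degree_one {σ : Type*} (u : σ →₀ ℕ) (h : u.degree = 1) :
    ∃ v, u = Finsupp.single v 1 := by
  classical
  have hne : u ≠ 0 := by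
    intro h0; rw [h0, map_zero] at h; exact one_ne_zero h.symm
  obtain ⟨v, hv⟩ := Finsupp.ne_iff.mp hne
  rw [Finsupp.coe_zero, Pi.zero_apply] at hv
  have hvs : v ∈ u.support := Finsupp.mem_support_iff.mpr hv
  refine ⟨v, ?_⟩
  have huv : u v = 1 := by
    have h1 : u v ≤ u.degree := Finsupp.le_degree v u
    omega
  ext w
  by_cases hw : w = v
  · subst hw; simp [huv]
  · rw [Finsupp.single_apply, if_neg (fun hh => hw hh.symm)]
    by_contra hw0
    have hws : w ∈ u.support := Finsupp.mem_support_iff.mpr hw0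
    have hsub : {v, w} ⊆ u.support := by
      intro a ha
      rcases Finset.mem_insert.mp ha with rfl | ha
      · exact hvs
      · rwa [Finset.mem_singleton.mp ha]
    have := Finset.sum_le_sum_of_subset (f := fun a => u a) hsub
    rw [Finset.sum_pair (fun hh => hw hh.symm)] at this
    have : u v + u w ≤ 1 := le_trans this (le_of_eq h)
    omega

lemma homog_one_eq_sum {σ : Type*} [Fintype σ] (p : MvPolynomial σ ℂ)
    (hp : p.IsHomogeneous 1) :
    p = ∑ v : σ, coeff (Finsupp.single v 1) p • X v := by
  classical
  ext u
  rw [coeff_sum]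
  simp_rw [coeff_smul, coeff_X', smul_eq_mul, mul_ite, mul_one, mul_zero]
  by_cases hu : ∃ v, u = Finsupp.single v 1
  · obtain ⟨v, rfl⟩ := hu
    rw [Finset.sum_eq_single v]
    · rw [if_pos rfl]
    · intro w _ hwv
      exact if_neg fun hh => hwv (Finsupp.single_left_injective one_ne_zero hh)
    · intro h; exact absurd (Finset.mem_univ v) h
  · rw [Finset.sum_eq_zero (fun v _ => if_neg (fun hh => hu ⟨v, hh.symm⟩))]
    by_contra h0
    have hd : u.degree = 1 := by
      have := hp h0
      rw [Finsupp.degree_eq_weight_one]; exact this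
    exact hu (eq_single_of_degree_one u hd)


/-- The key coefficient extraction: the coefficient of
`t^(r-k) * x^d` in `t^(r-k') * P(x)` is `coeff d P` if `k = k'` and `0` otherwise. -/
lemma coeff_tpow_rename {n : ℕ} (r k k' : ℕ) (hk : k ≤ r) (hk' : k' ≤ r) (d : Fin n →₀ ℕ)
    (P : MvPolynomial (Fin n) ℂ) :
    coeff (Finsupp.single (none : Option (Fin n)) (r - k) + Finsupp.mapDomain some d)
      (X (none : Option (Fin n)) ^ (r - k') * rename some P)
      = if k' = k then coeff d P else 0 := by
  classical
  set u := Finsupp.single (none : Option (Fin n)) (r - k) + Finsupp.mapDomain some d with hu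
  have hun : u none = r - k := by
    rw [hu, Finsupp.add_apply, Finsupp.single_eq_same,
      Finsupp.mapDomain_notin_range _ _ (by simp), add_zero]
  rw [X_pow_eq_monomial, coeff_monomial_mul']
  by_cases hle : Finsupp.single (none : Option (Fin n)) (r - k') ≤ u
  · rw [if_pos hle]
    have hkk : k' ≥ k := by
      have := (Finsupp.single_le_iff).mp hle
      rw [hun] at this
      omega
    rcases eq_or_lt_of_le hkk with rfl | hlt
    · rw [if_pos rfl, hu, add_tsub_cancel_left, one_mul,
        coeff_rename_mapDomain _ (Option.some_injective _)]
    · rw [if_neg (by omega), one_mul]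
      refine coeff_rename_zero _ _ _ none (by simp) ?_
      rw [Finsupp.tsub_apply, hun, Finsupp.single_eq_same]
      omega
  · rw [if_neg hle, if_neg]
    intro h
    subst h
    exact hle (by rw [Finsupp.single_le_iff, hun])

/-- Convolution formula for homogeneous components of a product. -/
lemma homogeneousComponent_mul {σ : Type*} (a b : MvPolynomial σ ℂ) (e : ℕ) :
    homogeneousComponent e (a * b) =
      ∑ p ∈ Finset.HasAntidiagonal.antidiagonal e,
        homogeneousComponent p.1 a * homogeneousComponent p.2 b := by
  classical
  set A := a.totalDegree
  set B := b.totalDegree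
  have ha := sum_homogeneousComponent a
  have hb := sum_homogeneousComponent b
  conv_lhs => rw [← ha, ← hb]
  rw [Finset.sum_mul_sum, map_sum]
  simp_rw [map_sum]
  have key : ∀ i j : ℕ, homogeneousComponent e (homogeneousComponent i a * homogeneousComponent j b)
      = if i + j = e then homogeneousComponent i a * homogeneousComponent j b else 0 := by
    intro i j
    have hm : homogeneousComponent i a * homogeneousComponent j b ∈
        homogeneousSubmodule σ ℂ (i + j) :=
      (homogeneousComponent_isHomogeneous i a).mul (homogeneousComponent_isHomogeneous j b)
    rw [homogeneousComponent_of_mem hm]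
    by_cases h : i + j = e
    · rw [if_pos h, if_pos h.symm]
    · rw [if_neg h, if_neg (fun hh => h hh.symm)]
  calc (∑ i ∈ Finset.range (A+1), ∑ j ∈ Finset.range (B+1),
          homogeneousComponent e (homogeneousComponent i a * homogeneousComponent j b))
      = ∑ i ∈ Finset.range (A+1), ∑ j ∈ Finset.range (B+1),
          if i + j = e then homogeneousComponent i a * homogeneousComponent j b else 0 := by
        simp_rw [key]
    _ = ∑ p ∈ (Finset.range (A+1) ×ˢ Finset.range (B+1)).filter (fun p => p.1 + p.2 = e),
          homogeneousComponent p.1 a * homogeneousComponent p.2 b := by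
        rw [Finset.sum_filter, Finset.sum_product]
    _ = ∑ p ∈ Finset.HasAntidiagonal.antidiagonal e,
          homogeneousComponent p.1 a * homogeneousComponent p.2 b := by
        apply Finset.sum_subset_zero_on_sdiff
        · intro p hp
          rw [Finset.mem_filter] at hp
          exact Finset.HasAntidiagonal.mem_antidiagonal.mpr hp.2
        · intro p hp
          rw [Finset.mem_sdiff, Finset.HasAntidiagonal.mem_antidiagonal] at hp
          obtain ⟨hpe, hpf⟩ := hp
          have : ¬(p.1 < A + 1 ∧ p.2 < B + 1) := by
            intro ⟨h1, h2⟩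
            exact hpf (Finset.mem_filter.mpr ⟨Finset.mem_product.mpr
              ⟨Finset.mem_range.mpr h1, Finset.mem_range.mpr h2⟩, hpe⟩)
          rcases not_and_or.mp this with h1 | h2
          · rw [homogeneousComponent_eq_zero _ a (by omega : a.totalDegree < p.1), zero_mul]
          · rw [homogeneousComponent_eq_zero _ b (by omega : b.totalDegree < p.2), mul_zero]
        · intro p _; rfl

def wEquiv (r : ℕ) (s : ℕ → ℕ) :
    WIdx r s ≃ (Σ k : (Finset.Icc 2 r : Finset ℕ), Fin (s k.1)) where
  toFun q := ⟨⟨q.1.1, Finset.mem_Icc.mpr ⟨q.2.1, q.2.2.1⟩⟩, ⟨q.1.2, q.2.2.2⟩⟩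
  invFun p := ⟨(p.1.1, p.2.1), (Finset.mem_Icc.mp p.1.2).1, (Finset.mem_Icc.mp p.1.2).2, p.2.2⟩
  left_inv q := by ext <;> rfl
  right_inv p := by ext <;> rfl

instance instFintypeWIdx (r : ℕ) (s : ℕ → ℕ) : Fintype (WIdx r s) :=
  Fintype.ofEquiv _ (wEquiv r s).symm

lemma card_wIdx (r : ℕ) (s : ℕ → ℕ) :
    Fintype.card (WIdx r s) = ∑ k ∈ Finset.Icc 2 r, s k := by
  rw [Fintype.card_congr (wEquiv r s), Fintype.card_sigma]
  rw [← Finset.sum_attach (Finset.Icc 2 r) s]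
  simp

lemma sum_wIdx {M : Type*} [AddCommMonoid M] {r : ℕ} {s : ℕ → ℕ} (k : ℕ)
    (h2 : 2 ≤ k) (hkr : k ≤ r) (H : ℕ → ℕ → M) :
    ∑ q : WIdx r s, (if q.1.1 = k then H q.1.1 q.1.2 else 0)
      = ∑ i ∈ Finset.range (s k), H k i := by
  classical
  rw [← Finset.sum_filter]
  refine Finset.sum_bij' (fun q _ => q.1.2) (fun i hi => ⟨(k, i), h2, hkr, Finset.mem_range.mp hi⟩)
    ?_ ?_ ?_ ?_ ?_
  · intro q hq
    have hk : q.1.1 = k := (Finset.mem_filter.mp hq).2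
    exact Finset.mem_range.mpr (hk ▸ q.2.2.2)
  · intro i hi
    exact Finset.mem_filter.mpr ⟨Finset.mem_univ _, rfl⟩
  · intro q hq
    have hk : q.1.1 = k := (Finset.mem_filter.mp hq).2
    ext
    · exact hk.symm
    · rfl
  · intro i hi; rfl
  · intro q hq
    have hk : q.1.1 = k := (Finset.mem_filter.mp hq).2
    rw [hk]
section
variable {n r : ℕ} {s : ℕ → ℕ}


variable (Q : ℕ → ℕ → MvPolynomial (Fin n) ℂ)
  (hr : 2 ≤ r)
  (hhom : ∀ k, 2 ≤ k → k ≤ r → ∀ i < s k, (Q k i).IsHomogeneous k)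

include hr hhom in
lemma phi_homog {p : SR n r s} {d : ℕ} (hp : p.IsHomogeneous d) :
    ((phiR n r s Q) p).IsHomogeneous (r * d) := by
  apply hp.aeval
  rintro ((_ | i) | ⟨⟨k, i⟩, h2, hkr, his⟩)
  · exact isHomogeneous_X_pow _ _
  · have h := (isHomogeneous_X_pow (R := ℂ) (none : Option (Fin n)) (r - 1)).mul
      (isHomogeneous_X ℂ (some i))
    rwa [Nat.sub_add_cancel (by omega : 1 ≤ r)] at h
  · have h := (isHomogeneous_X_pow (R := ℂ) (none : Option (Fin n)) (r - k)).mul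
      ((hhom k h2 hkr i his).rename_isHomogeneous (f := some))
    rwa [Nat.sub_add_cancel hkr] at h

include hr hhom in
lemma phi_hc (x : SR n r s) (e : ℕ) :
    (phiR n r s Q) (homogeneousComponent e x)
      = homogeneousComponent (r * e) ((phiR n r s Q) x) := by
  conv_rhs => rw [← sum_homogeneousComponent x]
  rw [map_sum, map_sum]
  have step : ∀ i : ℕ,
      homogeneousComponent (r * e) ((phiR n r s Q) (homogeneousComponent i x))
        = if e = i then (phiR n r s Q) (homogeneousComponent i x) else 0 := by
    intro i
    rw [homogeneousComponent_of_mem (phi_homog Q hr hhom (homogeneousComponent_isHomogeneous i x))]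
    congr 1
    simp only [eq_iff_iff]
    constructor
    · intro h; exact Nat.eq_of_mul_eq_mul_left (by omega) h
    · intro h; rw [h]
  rw [Finset.sum_congr rfl (fun i _ => step i), Finset.sum_ite_eq]
  by_cases he : e ∈ Finset.range (x.totalDegree + 1)
  · rw [if_pos he]
  · rw [if_neg he, homogeneousComponent_eq_zero _ x (by
      simp only [Finset.mem_range] at he; omega), map_zero]

include hr hhom in
lemma constantCoeff_phi (p : SR n r s) :
    constantCoeff ((phiR n r s Q) p) = constantCoeff p := by
  have key : (constantCoeff : MvPolynomial (Option (Fin n)) ℂ →+* ℂ).comp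
      ((phiR n r s Q) : SR n r s →+* MvPolynomial (Option (Fin n)) ℂ)
      = (constantCoeff : SR n r s →+* ℂ) := by
    apply MvPolynomial.ringHom_ext
    · intro a
      simp [phiR]
    · rintro ((_ | i) | ⟨⟨k, i⟩, h2, hkr, his⟩) <;>
        simp only [RingHom.coe_comp, Function.comp_apply, AlgHom.coe_toRingHom, phiR, aeval_X,
          constantCoeff_X, map_mul, map_pow]
      · rw [zero_pow (by omega : r ≠ 0)]
      · rw [mul_zero]
      · rw [constantCoeff_rename]
        have : constantCoeff (Q k i) = 0 := by
          have h := (hhom k h2 hkr i his).coeff_eq_zero (d := 0)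
            (by rw [map_zero]; omega)
          simpa [constantCoeff_eq] using h
        rw [this, mul_zero]
  exact RingHom.congr_fun key p

include hr hhom in
lemma ker_hc {x : SR n r s} (hx : x ∈ RingHom.ker (phiR n r s Q)) (e : ℕ) :
    homogeneousComponent e x ∈ RingHom.ker (phiR n r s Q) := by
  rw [RingHom.mem_ker] at hx ⊢
  rw [phi_hc Q hr hhom, hx, map_zero]

include hr hhom in
lemma ker_cc {x : SR n r s} (hx : x ∈ RingHom.ker (phiR n r s Q)) :
    constantCoeff x = 0 := by
  rw [← constantCoeff_phi Q hr hhom, RingHom.mem_ker.mp hx, map_zero]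

end

section
variable {n r : ℕ} {s : ℕ → ℕ} (Q : ℕ → ℕ → MvPolynomial (Fin n) ℂ)
  (hr : 2 ≤ r)
  (hhom : ∀ k, 2 ≤ k → k ≤ r → ∀ i < s k, (Q k i).IsHomogeneous k)
  (hli : ∀ k, 2 ≤ k → k ≤ r → LinearIndependent ℂ (fun i : Fin (s k) => Q k (i : ℕ)))

include hr hhom hli in
lemma ker_degree_one {x : SR n r s} (hx : x ∈ RingHom.ker (phiR n r s Q))
    (hhx : x.IsHomogeneous 1) : x = 0 := by
  classical
  set c : IdxR n r s → ℂ := fun v => coeff (Finsupp.single v 1) x with hc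
  have hxs : x = ∑ v : IdxR n r s, c v • X v := homog_one_eq_sum x hhx
  have hphi : (phiR n r s Q) x = 0 := RingHom.mem_ker.mp hx
  have key : ∀ k : ℕ, k ≤ r → ∀ d : Fin n →₀ ℕ,
      (0 : ℂ) =
        (c (Sum.inl none) • if 0 = k then coeff d (1 : MvPolynomial (Fin n) ℂ) else 0)
        + (∑ i : Fin n, c (Sum.inl (some i)) • if 1 = k then coeff d (X i) else 0)
        + ∑ q : WIdx r s, c (Sum.inr q) •
            if q.1.1 = k then coeff d (Q q.1.1 q.1.2) else 0 := by
    intro k hk d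
    have h0 : coeff (Finsupp.single (none : Option (Fin n)) (r - k) + Finsupp.mapDomain some d)
        ((phiR n r s Q) x) = 0 := by rw [hphi, coeff_zero]
    conv_lhs at h0 => rw [hxs]
    rw [map_sum] at h0
    simp_rw [map_smul] at h0
    rw [coeff_sum] at h0
    rw [Fintype.sum_sum_type, Fintype.sum_option] at h0
    simp_rw [coeff_smul] at h0
    have hz0 : (phiR n r s Q) (X (Sum.inl (none : Option (Fin n)) : IdxR n r s))
        = X (none : Option (Fin n)) ^ (r - 0) * rename some (1 : MvPolynomial (Fin n) ℂ) := by
      simp [phiR]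
    have hzi : ∀ i : Fin n, (phiR n r s Q) (X (Sum.inl (some i) : IdxR n r s))
        = X (none : Option (Fin n)) ^ (r - 1) * rename some (X i) := by
      intro i; simp [phiR]
    have hwq : ∀ q : WIdx r s, (phiR n r s Q) (X (Sum.inr q : IdxR n r s))
        = X (none : Option (Fin n)) ^ (r - q.1.1) * rename some (Q q.1.1 q.1.2) := by
      intro q; simp [phiR]
    rw [hz0] at h0
    simp_rw [hzi, hwq] at h0
    rw [coeff_tpow_rename r k 0 hk (by omega) d] at h0
    simp_rw [coeff_tpow_rename r k 1 hk (by omega) d,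
      fun q : WIdx r s => coeff_tpow_rename r k q.1.1 hk q.2.2.1 d (Q q.1.1 q.1.2)] at h0
    exact h0.symm
  -- c of z0 vanishes
  have h0 : c (Sum.inl none) = 0 := by
    have h := key 0 (by omega) 0
    rw [if_pos rfl] at h
    rw [Finset.sum_eq_zero (fun i _ => by rw [if_neg (by omega), smul_zero]),
      Finset.sum_eq_zero (fun q _ => by
        have h2 := q.2.1
        rw [if_neg (by omega), smul_zero])] at h
    simpa [eq_comm] using h
  -- c of z_i vanishes
  have h1 : ∀ i : Fin n, c (Sum.inl (some i)) = 0 := by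
    intro i
    have h := key 1 (by omega) (Finsupp.single i 1)
    have hthird : ∑ q : WIdx r s, c (Sum.inr q) •
        (if q.1.1 = 1 then coeff (Finsupp.single i 1) (Q q.1.1 q.1.2) else 0) = 0 :=
      Finset.sum_eq_zero (fun q _ => by
        have h2 := q.2.1
        rw [if_neg (by omega), smul_zero])
    rw [if_neg (by omega), smul_zero, hthird, add_zero, zero_add] at h
    have hsimp : ∀ j : Fin n, (c (Sum.inl (some j)) •
        if (1:ℕ) = 1 then coeff (Finsupp.single i 1) (X j) else 0)
        = if j = i then c (Sum.inl (some j)) else 0 := by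
      intro j
      rw [if_pos rfl, coeff_X']
      by_cases hji : j = i
      · subst hji; rw [if_pos rfl, if_pos rfl, smul_eq_mul, mul_one]
      · rw [if_neg (fun hh => hji (Finsupp.single_left_injective one_ne_zero hh)),
          if_neg hji, smul_zero]
    rw [Finset.sum_congr rfl (fun j _ => hsimp j),
      Finset.sum_ite_eq' Finset.univ i (fun j => c (Sum.inl (some j))),
      if_pos (Finset.mem_univ i)] at h
    exact h.symm
  -- c of w-variables vanishes
  have hw : ∀ q : WIdx r s, c (Sum.inr q) = 0 := by
    intro q0
    obtain ⟨⟨k, i0⟩, h2, hkr, his⟩ := q0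
    set cc : ℕ → ℂ := fun i =>
      if h : 2 ≤ k ∧ k ≤ r ∧ i < s k then c (Sum.inr ⟨(k, i), h⟩) else 0 with hcc
    have hsum : ∑ i ∈ Finset.range (s k), cc i • Q k i = 0 := by
      ext d
      rw [coeff_sum, coeff_zero]
      simp_rw [coeff_smul]
      by_cases hdeg : d.degree = k
      · have h := key k hkr d
        have hsecond : ∑ j : Fin n, c (Sum.inl (some j)) •
            (if (1:ℕ) = k then coeff d (X j : MvPolynomial (Fin n) ℂ) else 0) = 0 :=
          Finset.sum_eq_zero (fun j _ => by rw [if_neg (by omega), smul_zero])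
        rw [if_neg (by omega), smul_zero, hsecond, add_zero, zero_add] at h
        have hrw : ∀ q : WIdx r s, (c (Sum.inr q) •
            if q.1.1 = k then coeff d (Q q.1.1 q.1.2) else 0)
            = if q.1.1 = k then cc q.1.2 * coeff d (Q q.1.1 q.1.2) else 0 := by
          rintro ⟨⟨k', i'⟩, hq2⟩
          by_cases hqk : k' = k
          · subst hqk
            rw [if_pos rfl, if_pos rfl, smul_eq_mul]
            congr 1
            simp only [hcc]
            rw [dif_pos ⟨hq2.1, hq2.2.1, hq2.2.2⟩]
          · rw [if_neg hqk, if_neg hqk, smul_zero]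
        rw [Finset.sum_congr rfl (fun q _ => hrw q)] at h
        rw [sum_wIdx k h2 hkr (fun k' i => cc i * coeff d (Q k' i))] at h
        simp_rw [smul_eq_mul]
        exact h.symm
      · refine Finset.sum_eq_zero fun i hi => ?_
        rw [(hhom k h2 hkr i (Finset.mem_range.mp hi)).coeff_eq_zero hdeg, smul_zero]
    have hli' := hli k h2 hkr
    rw [linearIndependent_iff'] at hli'
    have hz := hli' Finset.univ (fun i : Fin (s k) => cc i)
      (by rw [← Fin.sum_univ_eq_sum_range (fun i => cc i • Q k i) (s k)] at hsum; exact hsum)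
    have := hz ⟨i0, his⟩ (Finset.mem_univ _)
    rw [hcc] at this
    simp only [dif_pos (⟨h2, hkr, his⟩ : 2 ≤ k ∧ k ≤ r ∧ i0 < s k)] at this
    exact this
  have hcv : ∀ v : IdxR n r s, c v = 0 := by
    rintro ((_ | i) | q)
    · exact h0
    · exact h1 i
    · exact hw q
  rw [hxs]
  exact Finset.sum_eq_zero (fun v _ => by rw [hcv v, zero_smul])

end

section
variable {n r : ℕ} {s : ℕ → ℕ} (Q : ℕ → ℕ → MvPolynomial (Fin n) ℂ)
  (g : ℕ → ℕ → ℕ → MvPolynomial (Fin n) ℂ)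
  (hr : 2 ≤ r)
  (hhom : ∀ k, 2 ≤ k → k ≤ r → ∀ i < s k, (Q k i).IsHomogeneous k)
  (hg1 : ∀ j, 3 ≤ j → j ≤ r → ∀ i < s j, ∀ l < s (j - 1), (g j i l).IsHomogeneous 1)
  (hEuler : ∀ j, 3 ≤ j → j ≤ r → ∀ i < s j,
      Q j i = ∑ l ∈ Finset.range (s (j - 1)), g j i l * Q (j - 1) l)

lemma rename_aeval_eq {σ τ : Type*} (f : σ → τ) (p : MvPolynomial σ ℂ) :
    rename f p = aeval (fun i => (X (f i) : MvPolynomial τ ℂ)) p := by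
  rw [← aeval_X_left_apply (rename f p), aeval_rename]
  rfl

lemma algHom_rename {σ τ : Type*} {A : Type*} [CommSemiring A] [Algebra ℂ A]
    (ψ : MvPolynomial τ ℂ →ₐ[ℂ] A) (f : σ → τ) (p : MvPolynomial σ ℂ) :
    ψ (rename f p) = aeval (fun a => ψ (X (f a))) p := by
  conv_lhs => rw [aeval_unique ψ]
  rw [aeval_rename]
  rfl

lemma WvarR_eq' (k i : ℕ) (h : 2 ≤ k ∧ k ≤ r ∧ i < s k) :
    WvarR n r s k i = X (Sum.inr ⟨(k, i), h⟩) := dif_pos h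

include hr hhom hg1 hEuler in
lemma phi_f (j i : ℕ) (h2 : 2 ≤ j) (hjr : j ≤ r) (his : i < s j) :
    (phiR n r s Q) (fR n r s Q g j i) = 0 := by
  have hren : ∀ (p : MvPolynomial (Fin n) ℂ) (dd : ℕ), p.IsHomogeneous dd →
      (phiR n r s Q) (rename (fun a : Fin n => (Sum.inl (some a) : IdxR n r s)) p)
        = (X (none : Option (Fin n)) ^ (r-1)) ^ dd * rename some p := by
    intro p dd hp
    rw [algHom_rename]
    simp only [phiR, aeval_X]
    rw [aeval_mul_homog hp (X (none : Option (Fin n)) ^ (r-1)) (fun a => X (some a)),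
      ← rename_aeval_eq]
  have hz0 : (phiR n r s Q) (X (Sum.inl none : IdxR n r s))
      = X (none : Option (Fin n)) ^ r := by simp [phiR]
  have hwq : ∀ (k ii : ℕ) (h : 2 ≤ k ∧ k ≤ r ∧ ii < s k), (phiR n r s Q) (WvarR n r s k ii)
      = X (none : Option (Fin n)) ^ (r - k) * rename some (Q k ii) := by
    intro k ii h
    rw [WvarR_eq' k ii h]
    simp [phiR]
  by_cases hj2 : j = 2
  · subst hj2
    rw [fR, if_pos rfl, map_sub, map_mul, hz0, hwq 2 i ⟨h2, hjr, his⟩,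
      hren (Q 2 i) 2 (hhom 2 le_rfl hjr i his)]
    rw [← mul_assoc, ← pow_add, ← pow_mul, show r + (r-2) = (r-1)*2 by omega]
    exact sub_self _
  · have hj3 : 3 ≤ j := by omega
    rw [fR, if_neg hj2, map_sub, map_mul, hz0, hwq j i ⟨h2, hjr, his⟩, map_sum]
    have hterm : ∀ l ∈ Finset.range (s (j-1)),
        (phiR n r s Q) (rename (fun a : Fin n => (Sum.inl (some a) : IdxR n r s)) (g j i l)
          * WvarR n r s (j-1) l)
        = X (none : Option (Fin n)) ^ (2*r - j) * rename some (g j i l * Q (j-1) l) := by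
      intro l hl
      rw [map_mul, hren (g j i l) 1 (hg1 j hj3 hjr i his l (Finset.mem_range.mp hl)),
        hwq (j-1) l ⟨by omega, by omega, Finset.mem_range.mp hl⟩, pow_one,
        mul_mul_mul_comm, ← pow_add, show (r-1) + (r-(j-1)) = 2*r - j by omega, map_mul]
    rw [Finset.sum_congr rfl hterm, ← Finset.mul_sum, ← map_sum, ← hEuler j hj3 hjr i his]
    rw [← mul_assoc, ← pow_add, show r + (r-j) = 2*r - j by omega]
    exact sub_self _

include hhom hg1 in
lemma f_homog (j i : ℕ) (h2 : 2 ≤ j) (hjr : j ≤ r) (his : i < s j) :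
    (fR n r s Q g j i).IsHomogeneous 2 := by
  rw [fR]
  apply MvPolynomial.IsHomogeneous.sub
  · rw [WvarR_eq' j i ⟨h2, hjr, his⟩]
    exact (isHomogeneous_X ℂ _).mul (isHomogeneous_X ℂ _)
  · by_cases hj2 : j = 2
    · rw [if_pos hj2]
      exact (hhom 2 le_rfl (by omega) i (by rwa [hj2] at his)).rename_isHomogeneous
    · rw [if_neg hj2]
      apply MvPolynomial.IsHomogeneous.sum
      intro l hl
      have hWl : (WvarR n r s (j-1) l).IsHomogeneous 1 := by
        rw [WvarR_eq' (j-1) l ⟨by omega, by omega, Finset.mem_range.mp hl⟩]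
        exact isHomogeneous_X ℂ _
      exact ((hg1 j (by omega) hjr i his l
        (Finset.mem_range.mp hl)).rename_isHomogeneous).mul hWl

include hg1 in
lemma f_li : LinearIndependent ℂ (fun q : WIdx r s => fR n r s Q g q.1.1 q.1.2) := by
  classical
  rw [linearIndependent_iff']
  intro t a hsum q0 hq0
  set u : IdxR n r s →₀ ℕ :=
    Finsupp.single (Sum.inl none) 1 + Finsupp.single (Sum.inr q0) 1 with hu
  have hunone : u (Sum.inl none) = 1 := by
    simp [hu, Finsupp.single_apply]
  have hcoeff : ∀ q : WIdx r s,
      coeff u (fR n r s Q g q.1.1 q.1.2) = if q = q0 then 1 else 0 := by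
    rintro ⟨⟨j, i⟩, h2, hjr, his⟩
    rw [fR, WvarR_eq' j i ⟨h2, hjr, his⟩]
    dsimp only
    have hnotr : (Sum.inl none : IdxR n r s) ∉
        Set.range (fun a : Fin n => (Sum.inl (some a) : IdxR n r s)) := by
      rintro ⟨a, ha⟩
      simp at ha
    rw [coeff_sub]
    have hmin : coeff u ((X (Sum.inl none) *
        X (Sum.inr ⟨(j, i), ⟨h2, hjr, his⟩⟩) : SR n r s)) =
        if (⟨(j, i), ⟨h2, hjr, his⟩⟩ : WIdx r s) = q0 then 1 else 0 := by
      rw [hu, coeff_X_mul, coeff_X']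
      by_cases hqq : (⟨(j, i), ⟨h2, hjr, his⟩⟩ : WIdx r s) = q0
      · rw [if_pos hqq, if_pos (by rw [hqq])]
      · rw [if_neg (fun hh => hqq
          (Sum.inr_injective (Finsupp.single_left_injective one_ne_zero hh))), if_neg hqq]
    have hsub : coeff u (if j = 2
        then rename (fun a : Fin n => (Sum.inl (some a) : IdxR n r s)) (Q 2 i)
        else ∑ l ∈ Finset.range (s (j - 1)),
          rename (fun a : Fin n => (Sum.inl (some a) : IdxR n r s)) (g j i l)
            * WvarR n r s (j - 1) l) = 0 := by
      by_cases hj2 : j = 2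
      · rw [if_pos hj2]
        exact coeff_rename_zero _ _ _ (Sum.inl none) hnotr (by rw [hunone]; omega)
      · rw [if_neg hj2, coeff_sum]
        refine Finset.sum_eq_zero fun l hl => ?_
        have hcond : 2 ≤ j - 1 ∧ j - 1 ≤ r ∧ l < s (j - 1) :=
          ⟨by omega, by omega, Finset.mem_range.mp hl⟩
        set b : IdxR n r s := Sum.inr ⟨(j-1, l), hcond⟩ with hb
        rw [WvarR_eq' (j-1) l hcond, ← hb, coeff_mul_X']
        by_cases hbs : b ∈ u.support
        · rw [if_pos hbs]
          refine coeff_rename_zero _ _ _ (Sum.inl none) hnotr ?_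
          rw [Finsupp.tsub_apply, hunone, Finsupp.single_apply,
            if_neg (by rw [hb]; simp)]
          omega
        · rw [if_neg hbs]
    rw [hsub, sub_zero]
    exact hmin
  have hc := congrArg (coeff u) hsum
  rw [coeff_zero, coeff_sum] at hc
  simp only [coeff_smul, hcoeff, smul_eq_mul, mul_ite, mul_one, mul_zero] at hc
  rw [Finset.sum_ite_eq' t q0 a, if_pos hq0] at hc
  exact hc

end

end EulerSymAux

open EulerSymAux

/-- (Proposition 3.1) If the ideal `I = ker φ` can be generated by
`m = s_2 + ⋯ + s_r` elements (i.e. `M(F)` is a complete intersection),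
then `I` equals the ideal `J₁` generated by the `m` quadrics `f^{(j)}_i`. -/
theorem euler_symmetric_complete_intersection_is_quadratic
    (n r : ℕ) (hn : 1 ≤ n) (hr : 2 ≤ r)
    (s : ℕ → ℕ) (hsr : 1 ≤ s r)
    (Q : ℕ → ℕ → MvPolynomial (Fin n) ℂ)
    (hhom : ∀ k, 2 ≤ k → k ≤ r → ∀ i < s k, (Q k i).IsHomogeneous k)
    (hli : ∀ k, 2 ≤ k → k ≤ r → LinearIndependent ℂ (fun i : Fin (s k) => Q k (i : ℕ)))
    (hprol : ∀ k, 2 ≤ k → k < r → ∀ i < s (k + 1), ∀ l : Fin n,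
      pderiv l (Q (k + 1) i) ∈ Submodule.span ℂ {q | ∃ j < s k, q = Q k j})
    (g : ℕ → ℕ → ℕ → MvPolynomial (Fin n) ℂ)
    (hg1 : ∀ j, 3 ≤ j → j ≤ r → ∀ i < s j, ∀ l < s (j - 1), (g j i l).IsHomogeneous 1)
    (hEuler : ∀ j, 3 ≤ j → j ≤ r → ∀ i < s j,
      Q j i = ∑ l ∈ Finset.range (s (j - 1)), g j i l * Q (j - 1) l)
    (hci : ∃ gens : Fin (∑ k ∈ Finset.Icc 2 r, s k) → SR n r s,
        RingHom.ker (phiR n r s Q) = Ideal.span (Set.range gens)) :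
    RingHom.ker (phiR n r s Q) = J1 n r s Q g := by
  classical
  -- J₁ ⊆ I
  have hJle : J1 n r s Q g ≤ RingHom.ker (phiR n r s Q) := by
    rw [J1, Ideal.span_le]
    rintro p ⟨j, i, h2, hjr, his, rfl⟩
    exact RingHom.mem_ker.mpr (phi_f Q g hr hhom hg1 hEuler j i h2 hjr his)
  -- the family of quadrics
  set F : WIdx r s → SR n r s := fun q => fR n r s Q g q.1.1 q.1.2 with hF
  have hFI : ∀ q : WIdx r s, F q ∈ RingHom.ker (phiR n r s Q) := fun q =>
    RingHom.mem_ker.mpr (phi_f Q g hr hhom hg1 hEuler q.1.1 q.1.2 q.2.1 q.2.2.1 q.2.2.2)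
  have hFJ : ∀ q : WIdx r s, F q ∈ J1 n r s Q g := fun q =>
    Ideal.subset_span ⟨q.1.1, q.1.2, q.2.1, q.2.2.1, q.2.2.2, rfl⟩
  have hFhom : ∀ q : WIdx r s, (F q).IsHomogeneous 2 := fun q =>
    f_homog Q g hhom hg1 q.1.1 q.1.2 q.2.1 q.2.2.1 q.2.2.2
  obtain ⟨gens, hgens⟩ := hci
  -- the ideal 𝔪·I
  set mI : Ideal (SR n r s) :=
    RingHom.ker (constantCoeff : SR n r s →+* ℂ) * RingHom.ker (phiR n r s Q) with hmI
  have hU2 : ∀ u ∈ mI, homogeneousComponent 2 u = 0 := by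
    intro u hu
    refine Submodule.mul_induction_on hu ?_ ?_
    · intro a ha b hb
      rw [homogeneousComponent_mul]
      refine Finset.sum_eq_zero fun p hp => ?_
      have hpe : p.1 + p.2 = 2 := Finset.HasAntidiagonal.mem_antidiagonal.mp hp
      by_cases hp2 : p.2 = 0
      · have hb0 : coeff 0 b = 0 := by
          have := ker_cc Q hr hhom hb
          rwa [constantCoeff_eq] at this
        rw [hp2, homogeneousComponent_zero, hb0, map_zero, mul_zero]
      · by_cases hp1 : p.1 = 0
        · have ha0 : coeff 0 a = 0 := by
            have : constantCoeff a = 0 := RingHom.mem_ker.mp ha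
            rwa [constantCoeff_eq] at this
          rw [hp1, homogeneousComponent_zero, ha0, map_zero, zero_mul]
        · have hp21 : p.2 = 1 := by omega
          rw [hp21, ker_degree_one Q hr hhom hli (ker_hc Q hr hhom hb 1)
            (homogeneousComponent_isHomogeneous 1 b), mul_zero]
    · intro x y hx hy
      rw [map_add, hx, hy, add_zero]
  -- linear-algebra setup
  set Wsub : Submodule ℂ (SR n r s) := Submodule.span ℂ (Set.range F) with hWdef
  set Isub : Submodule ℂ (SR n r s) :=
    Submodule.restrictScalars ℂ (RingHom.ker (phiR n r s Q)) with hIdef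
  set Vsub : Submodule ℂ (SR n r s) := Submodule.span ℂ (Set.range gens) with hVdef
  set Usub : Submodule ℂ (SR n r s) := Submodule.restrictScalars ℂ mI with hUdef
  set π := Usub.mkQ with hpi
  have hWhom : Wsub ≤ Submodule.restrictScalars ℂ
      (homogeneousSubmodule (IdxR n r s) ℂ 2) := by
    rw [hWdef, Submodule.span_le]
    rintro p ⟨q, rfl⟩
    exact hFhom q
  have hWI : Wsub ≤ Isub := by
    rw [hWdef, Submodule.span_le]
    rintro p ⟨q, rfl⟩
    exact hFI q
  have hIVU : ∀ x ∈ Isub, x ∈ Vsub ⊔ Usub := by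
    intro x hx
    have hx' : x ∈ Ideal.span (Set.range gens) := by
      rw [← hgens]; exact hx
    obtain ⟨cf, hcf⟩ := Ideal.mem_span_range_iff_exists_fun.mp hx'
    rw [← hcf]
    refine Submodule.sum_mem _ fun i _ => ?_
    have hsplit : cf i * gens i = (constantCoeff (cf i)) • gens i
        + (cf i - MvPolynomial.C (constantCoeff (cf i))) * gens i := by
      rw [smul_eq_C_mul]; ring
    rw [hsplit]
    refine Submodule.add_mem _ (Submodule.mem_sup_left ?_) (Submodule.mem_sup_right ?_)
    · exact Submodule.smul_mem _ _ (Submodule.subset_span ⟨i, rfl⟩)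
    · show _ ∈ mI
      refine Ideal.mul_mem_mul ?_ ?_
      · rw [RingHom.mem_ker, map_sub, constantCoeff_C, sub_self]
      · exact hgens ▸ Ideal.subset_span ⟨i, rfl⟩
  have hWU : ∀ x ∈ Wsub, x ∈ Usub → x = 0 := by
    intro x hxW hxU
    have hx2 : x ∈ homogeneousSubmodule (IdxR n r s) ℂ 2 := hWhom hxW
    have hx2' : homogeneousComponent 2 x = x := by
      rw [homogeneousComponent_of_mem hx2, if_pos rfl]
    rw [← hx2']
    exact hU2 x hxU
  have hpiF : LinearIndependent ℂ (π ∘ F) := by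
    rw [linearIndependent_iff']
    intro t a hsuma q hq
    have hsum' : π (∑ q ∈ t, a q • F q) = 0 := by
      rw [map_sum]
      simpa [map_smul] using hsuma
    have hmemU : (∑ q ∈ t, a q • F q) ∈ Usub := by
      rw [← Submodule.ker_mkQ Usub, LinearMap.mem_ker]
      exact hsum'
    have hmemW : (∑ q ∈ t, a q • F q) ∈ Wsub :=
      Submodule.sum_mem _ fun q _ => Submodule.smul_mem _ _ (Submodule.subset_span ⟨q, rfl⟩)
    have h0 : ∑ q ∈ t, a q • F q = 0 := hWU _ hmemW hmemU
    have hind := f_li Q g hg1 (n := n) (r := r) (s := s)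
    rw [linearIndependent_iff'] at hind
    exact hind t a h0 q hq
  -- dimension count
  haveI : FiniteDimensional ℂ Vsub := FiniteDimensional.span_of_finite ℂ (Set.finite_range gens)
  haveI : FiniteDimensional ℂ (Vsub.map π) := Module.Finite.map _ _
  have hmapIV : Isub.map π ≤ Vsub.map π := by
    rintro z ⟨x, hx, rfl⟩
    obtain ⟨v, hv, u, hu, rfl⟩ := Submodule.mem_sup.mp (hIVU x hx)
    have hu0 : π u = 0 := by
      rw [hpi, Submodule.mkQ_apply]
      exact (Submodule.Quotient.mk_eq_zero Usub).mpr hu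
    rw [map_add, hu0, add_zero]
    exact ⟨v, hv, rfl⟩
  haveI : FiniteDimensional ℂ (Isub.map π) := Submodule.finiteDimensional_of_le hmapIV
  have hfrW : Module.finrank ℂ (Wsub.map π) = ∑ k ∈ Finset.Icc 2 r, s k := by
    rw [hWdef, Submodule.map_span, ← Set.range_comp, finrank_span_eq_card hpiF, card_wIdx]
  have hfrV : Module.finrank ℂ (Vsub.map π) ≤ ∑ k ∈ Finset.Icc 2 r, s k := by
    refine le_trans (Submodule.finrank_map_le π Vsub) ?_
    have h1 := finrank_span_le_card (R := ℂ) (Set.range gens)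
    rw [Set.toFinset_range] at h1
    refine le_trans h1 (le_trans Finset.card_image_le ?_)
    simp
  have heq : Wsub.map π = Isub.map π := by
    refine Submodule.eq_of_le_of_finrank_le (Submodule.map_mono hWI) ?_
    have hle2 : Module.finrank ℂ (Isub.map π) ≤ Module.finrank ℂ (Vsub.map π) :=
      Submodule.finrank_mono hmapIV
    omega
  have hIWU : ∀ x ∈ RingHom.ker (phiR n r s Q), ∃ w ∈ Wsub, x - w ∈ mI := by
    intro x hx
    have hxm : π x ∈ Isub.map π := ⟨x, hx, rfl⟩
    rw [← heq] at hxm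
    obtain ⟨w, hw, hwx⟩ := hxm
    refine ⟨w, hw, ?_⟩
    have hz : π (x - w) = 0 := by rw [map_sub, hwx, sub_self]
    rw [hpi, Submodule.mkQ_apply] at hz
    exact (Submodule.Quotient.mk_eq_zero Usub).mp hz
  have hWJ : ∀ w ∈ Wsub, w ∈ J1 n r s Q g := by
    intro w hw
    have : Wsub ≤ Submodule.restrictScalars ℂ
        (Submodule.restrictScalars (SR n r s) (J1 n r s Q g)) := by
      rw [hWdef, Submodule.span_le]
      rintro p ⟨q, rfl⟩
      exact hFJ q
    exact this hw
  -- main induction on the degree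
  have main : ∀ e : ℕ, ∀ y ∈ RingHom.ker (phiR n r s Q),
      homogeneousComponent e y ∈ J1 n r s Q g := by
    intro e
    induction e using Nat.strong_induction_on with
    | _ e IH =>
      intro y hy
      obtain ⟨w, hwW, hu⟩ := hIWU y hy
      have hysplit : y = w + (y - w) := by ring
      rw [hysplit, map_add]
      refine Ideal.add_mem _ ?_ ?_
      · have hw2 : w ∈ homogeneousSubmodule (IdxR n r s) ℂ 2 := hWhom hwW
        rw [homogeneousComponent_of_mem hw2]
        by_cases he2 : e = 2
        · rw [if_pos he2]
          exact hWJ w hwW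
        · rw [if_neg he2]
          exact Ideal.zero_mem _
      · refine Submodule.mul_induction_on hu ?_ ?_
        · intro a ha b hb
          rw [homogeneousComponent_mul]
          refine Ideal.sum_mem _ fun p hp => ?_
          have hpe : p.1 + p.2 = e := Finset.HasAntidiagonal.mem_antidiagonal.mp hp
          by_cases hp1 : p.1 = 0
          · have ha0 : coeff 0 a = 0 := by
              have : constantCoeff a = 0 := RingHom.mem_ker.mp ha
              rwa [constantCoeff_eq] at this
            rw [hp1, homogeneousComponent_zero, ha0, map_zero, zero_mul]
            exact Ideal.zero_mem _
          · have hlt : p.2 < e := by omega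
            exact Ideal.mul_mem_left _ _ (IH p.2 hlt b hb)
        · intro x y hx hy
          rw [map_add]
          exact Ideal.add_mem _ hx hy
  refine le_antisymm ?_ hJle
  intro x hx
  have hxs := sum_homogeneousComponent x
  rw [← hxs]
  exact Ideal.sum_mem _ fun i _ => main i x hx
end
end

section
/- (Lemma 3.2) Assume r ≥ 3 and s_r = 1. Let G be a nonzero homogeneous polynomial in the variables z_1, …, z_n, w^{(r−1)}_1, …, w^{(r−1)}_{s_{r−1}}, w^{(r)}_1 which can be written G = G_0 + w^{(r)}_1·G_1, where G_0 is a nonzero polynomial in the variables w^{(r−1)}_1, …, w^{(r−1)}_{s_{r−1}} only. If G ∈ I = ker φ, then G does not lie in the radical of the ideal J₁. -/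
open MvPolynomial

noncomputable section

/-- (Lemma 3.2) Assume `r ≥ 3` and `s_r = 1`.  Let `G` be a nonzero homogeneous polynomial
in the variables `z_1, …, z_n, w^{(r−1)}_1, …, w^{(r−1)}_{s_{r−1}}, w^{(r)}_1` which can be
written `G = G₀ + w^{(r)}_1·G₁` with `G₀` a nonzero polynomial in the variables
`w^{(r−1)}_1, …, w^{(r−1)}_{s_{r−1}}` only.  If `G ∈ I = ker φ`, then `G` does not lie in
the radical of the ideal `J₁`. -/
theorem not_mem_radical_J1_of_mem_ker
    (n r : ℕ) (hn : 1 ≤ n) (hr : 3 ≤ r)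
    (s : ℕ → ℕ) (hsr : s r = 1)
    (Q : ℕ → ℕ → MvPolynomial (Fin n) ℂ)
    (hhom : ∀ k, 2 ≤ k → k ≤ r → ∀ i < s k, (Q k i).IsHomogeneous k)
    (hli : ∀ k, 2 ≤ k → k ≤ r → LinearIndependent ℂ (fun i : Fin (s k) => Q k (i : ℕ)))
    (hprol : ∀ k, 2 ≤ k → k < r → ∀ i < s (k + 1), ∀ l : Fin n,
      pderiv l (Q (k + 1) i) ∈ Submodule.span ℂ {q | ∃ j < s k, q = Q k j})
    (g : ℕ → ℕ → ℕ → MvPolynomial (Fin n) ℂ)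
    (hg1 : ∀ j, 3 ≤ j → j ≤ r → ∀ i < s j, ∀ l < s (j - 1), (g j i l).IsHomogeneous 1)
    (hEuler : ∀ j, 3 ≤ j → j ≤ r → ∀ i < s j,
      Q j i = ∑ l ∈ Finset.range (s (j - 1)), g j i l * Q (j - 1) l)
    (G G₀ G₁ : SR n r s)
    (hGne : G ≠ 0)
    (hGhom : ∃ d : ℕ, G.IsHomogeneous d)
    (hGsupp : G ∈ MvPolynomial.supported ℂ
      {u : IdxR n r s | (∃ i : Fin n, u = Sum.inl (some i)) ∨
        (∃ p, u = Sum.inr p ∧ (p.1.1 = r - 1 ∨ (p.1.1 = r ∧ p.1.2 = 0)))})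
    (hdec : G = G₀ + WvarR n r s r 0 * G₁)
    (hG₀ne : G₀ ≠ 0)
    (hG₀supp : G₀ ∈ MvPolynomial.supported ℂ
      {u : IdxR n r s | ∃ p, u = Sum.inr p ∧ p.1.1 = r - 1})
    (hGI : G ∈ RingHom.ker (phiR n r s Q)) :
    G ∉ (J1 n r s Q g).radical := by
  classical
  -- Choose a point where `G₀` does not vanish.
  obtain ⟨c, hc⟩ : ∃ c : IdxR n r s → ℂ, eval c G₀ ≠ 0 := by
    by_contra h
    push_neg at h
    exact hG₀ne (MvPolynomial.funext fun x => by simp [h x])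
  set T : Set (IdxR n r s) := {u | ∃ p, u = Sum.inr p ∧ p.1.1 = r - 1} with hT
  set a : IdxR n r s → ℂ := fun u => if u ∈ T then c u else 0 with ha
  have hvars : ↑G₀.vars ⊆ T := (mem_supported).mp hG₀supp
  have hG₀eval : (eval a) G₀ = (eval c) G₀ := by
    refine MvPolynomial.hom_congr_vars ?_ ?_ rfl
    · ext x
      simp
    · intro i hi _
      have hiT : i ∈ T := hvars hi
      simp [ha, hiT]
  have haz : ∀ u : Option (Fin n), a (Sum.inl u) = 0 := by
    intro u
    simp [ha, hT]
  have haW : eval a (WvarR n r s r 0) = 0 := by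
    have h : 2 ≤ r ∧ r ≤ r ∧ 0 < s r := ⟨by omega, le_rfl, by omega⟩
    rw [WvarR, dif_pos h]
    have : (Sum.inr (⟨(r, 0), h⟩ : {p : ℕ × ℕ // 2 ≤ p.1 ∧ p.1 ≤ r ∧ p.2 < s p.1}) :
        IdxR n r s) ∉ T := by
      rintro ⟨p, hp, hp2⟩
      rw [Sum.inr.injEq] at hp
      subst hp
      simp only at hp2
      omega
    simp [ha, this]
  have hGeval : eval a G ≠ 0 := by
    rw [hdec, map_add, map_mul, haW, zero_mul, add_zero, hG₀eval]
    exact hc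
  intro hrad
  obtain ⟨N, hN⟩ := hrad
  have hker : J1 n r s Q g ≤ RingHom.ker (eval a) := by
    rw [J1, Ideal.span_le]
    rintro p ⟨j, i, hj2, hjr, hi, rfl⟩
    have hz0 : eval a (X (Sum.inl none) : SR n r s) = 0 := by simp [haz]
    have hcomp : (a ∘ fun x : Fin n => (Sum.inl (some x) : IdxR n r s)) =
        (fun _ => 0 : Fin n → ℂ) := by
      funext x
      simp [haz]
    simp only [SetLike.mem_coe, RingHom.mem_ker, fR, map_sub, map_mul, hz0, zero_mul, zero_sub,
      neg_eq_zero]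
    split_ifs with h2
    · subst h2
      rw [eval_rename, hcomp, eval_zero']
      have hhQ := hhom 2 le_rfl (by omega) i hi
      have : constantCoeff (Q 2 i) = coeff 0 (Q 2 i) := rfl
      rw [this, hhQ.coeff_eq_zero (by simp)]
    · rw [map_sum]
      refine Finset.sum_eq_zero fun l hl => ?_
      rw [map_mul, eval_rename, hcomp, eval_zero']
      have hhg := hg1 j (by omega) hjr i hi l (Finset.mem_range.mp hl)
      have : constantCoeff (g j i l) = coeff 0 (g j i l) := rfl
      rw [this, hhg.coeff_eq_zero (by simp), zero_mul]
  have hzero : (eval a G) ^ N = 0 := by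
    have := hker hN
    rw [RingHom.mem_ker, map_pow] at this
    exact this
  have hN0 : N ≠ 0 := by
    rintro rfl
    rw [pow_zero] at hzero
    exact one_ne_zero hzero
  exact hGeval (pow_eq_zero_iff hN0 |>.mp hzero)
end
end

section
/- (Lemma 3.3) Let F ∈ ℂ[x_1, …, x_n] be a nonzero homogeneous polynomial of degree m ≥ 1, and suppose that the ℂ-linear span of its partial derivatives ∂F/∂x_1, …, ∂F/∂x_n is a vector space of dimension k (necessarily k ≤ n). Then there exist k linearly independent homogeneous linear forms f_1, …, f_k ∈ ℂ[x_1, …, x_n] such that F belongs to the ℂ-subalgebra of ℂ[x_1, …, x_n] generated by f_1, …, f_k (equivalently, F is a homogeneous polynomial of degree m in f_1, …, f_k). -/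
open MvPolynomial

noncomputable def PhiSub (n : ℕ) (P : Matrix (Fin n) (Fin n) ℂ) :
    MvPolynomial (Fin n) ℂ →ₐ[ℂ] MvPolynomial (Fin n) ℂ :=
  aeval (fun i => ∑ j, C (P i j) * X j)

lemma PhiSub_X (n : ℕ) (P : Matrix (Fin n) (Fin n) ℂ) (i : Fin n) :
    PhiSub n P (X i) = ∑ j, C (P i j) * X j := aeval_X _ _

lemma PhiSub_C (n : ℕ) (P : Matrix (Fin n) (Fin n) ℂ) (a : ℂ) :
    PhiSub n P (C a) = C a := by
  simp [PhiSub, algebraMap_eq]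

lemma PhiSub_comp (n : ℕ) (P Q : Matrix (Fin n) (Fin n) ℂ) (F : MvPolynomial (Fin n) ℂ) :
    PhiSub n P (PhiSub n Q F) = PhiSub n (Q * P) F := by
  have : (PhiSub n P).comp (PhiSub n Q) = PhiSub n (Q * P) := by
    apply MvPolynomial.algHom_ext
    intro i
    simp only [AlgHom.comp_apply, PhiSub_X, map_sum, map_mul, PhiSub_C, Finset.mul_sum]
    rw [Finset.sum_comm]
    refine Finset.sum_congr rfl fun l _ => ?_
    rw [Matrix.mul_apply, map_sum, Finset.sum_mul]
    refine Finset.sum_congr rfl fun j _ => ?_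
    rw [map_mul]; ring
  calc PhiSub n P (PhiSub n Q F) = ((PhiSub n P).comp (PhiSub n Q)) F := rfl
  _ = PhiSub n (Q * P) F := by rw [this]

lemma PhiSub_one (n : ℕ) (F : MvPolynomial (Fin n) ℂ) : PhiSub n 1 F = F := by
  have : PhiSub n 1 = AlgHom.id ℂ _ := by
    apply MvPolynomial.algHom_ext
    intro i
    classical
    simp [PhiSub_X, Matrix.one_apply, Finset.sum_ite_eq]
  rw [this]; rfl

lemma pderiv_PhiSub (n : ℕ) (P : Matrix (Fin n) (Fin n) ℂ) (t : Fin n)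
    (F : MvPolynomial (Fin n) ℂ) :
    pderiv t (PhiSub n P F) = ∑ i, PhiSub n P (pderiv i F) * C (P i t) := by
  classical
  induction F using MvPolynomial.induction_on with
  | C a => simp [PhiSub_C]
  | add p q hp hq =>
      simp only [map_add, hp, hq, ← Finset.sum_add_distrib]
      refine Finset.sum_congr rfl fun i _ => by ring
  | mul_X p i hp =>
      have hXi : pderiv t (PhiSub n P (X i)) = C (P i t) := by
        rw [PhiSub_X]
        simp only [map_sum, pderiv_mul, pderiv_C, zero_mul, zero_add]
        rw [Finset.sum_eq_single t]
        · simp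
        · intro j _ hj; rw [pderiv_X_of_ne hj]; ring
        · intro h; exact absurd (Finset.mem_univ t) h
      rw [map_mul, pderiv_mul, hp, hXi]
      have : ∀ j : Fin n, pderiv j (p * X i)
          = pderiv j p * X i + p * if i = j then 1 else 0 := by
        intro j
        rw [pderiv_mul]
        congr 1
        by_cases h : i = j
        · subst h; simp
        · rw [pderiv_X_of_ne h]; simp [h]
      simp only [this, map_add, map_mul, Finset.sum_add_distrib, add_mul]
      congr 1
      · rw [Finset.sum_mul]
        exact Finset.sum_congr rfl fun j _ => by ring
      · rw [Finset.sum_eq_single i]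
        · simp
        · intro j _ hj; simp [Ne.symm hj]
        · intro h; exact absurd (Finset.mem_univ i) h


lemma coeff_pderiv' {n : ℕ} (i : Fin n) (u : Fin n →₀ ℕ) (f : MvPolynomial (Fin n) ℂ) :
    coeff u (pderiv i f) = (u i + 1 : ℂ) * coeff (u + Finsupp.single i 1) f := by
  classical
  induction f using MvPolynomial.induction_on' with
  | add p q hp hq => simp [hp, hq, mul_add]
  | monomial s a =>
      rw [pderiv_monomial, coeff_monomial, coeff_monomial]
      by_cases h : s = u + Finsupp.single i 1
      · subst h
        have h1 : u + Finsupp.single i 1 - Finsupp.single i 1 = u := by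
          ext j; simp [Finsupp.single_apply]
        have h2 : (u + Finsupp.single i 1 : Fin n →₀ ℕ) i = u i + 1 := by simp
        rw [if_pos h1, h2, if_pos rfl]
        push_cast; ring
      · rw [if_neg h, mul_zero]
        by_cases h2 : s - Finsupp.single i 1 = u
        · rw [if_pos h2]
          by_cases h3 : s i = 0
          · simp [h3]
          · exfalso
            apply h
            rw [← h2]
            ext j
            rcases eq_or_ne j i with rfl | hj
            · simp; omega
            · simp [Finsupp.single_apply, hj.symm, Ne.symm hj]
        · rw [if_neg h2]

lemma pderiv_ne_zero_of_mem_vars {n : ℕ} {i : Fin n} {f : MvPolynomial (Fin n) ℂ}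
    (h : i ∈ f.vars) : pderiv i f ≠ 0 := by
  classical
  rw [mem_vars] at h
  obtain ⟨d, hd, hi⟩ := h
  intro hzero
  have hdne : d i ≠ 0 := Finsupp.mem_support_iff.mp hi
  have hdd : (d - Finsupp.single i 1) + Finsupp.single i 1 = d := by
    ext j
    rcases eq_or_ne j i with rfl | hj
    · simp; omega
    · simp [Finsupp.single_apply, hj.symm, Ne.symm hj]
  have := coeff_pderiv' i (d - Finsupp.single i 1) f
  rw [hzero, coeff_zero, hdd] at this
  have hne : (((d - Finsupp.single i 1 : Fin n →₀ ℕ)) i + 1 : ℂ) ≠ 0 := by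
    exact Nat.cast_add_one_ne_zero _
  have : coeff d f = 0 := by
    field_simp at this
    exact (mul_eq_zero.mp this.symm).resolve_left hne
  exact Finsupp.mem_support_iff.mp hd this


/-- (Lemma 3.3) Let `F ∈ ℂ[x_1, …, x_n]` be a nonzero homogeneous polynomial of degree
`m ≥ 1` and suppose the ℂ-linear span of its partial derivatives `∂F/∂x_1, …, ∂F/∂x_n`
has dimension `k`.  Then there exist `k` linearly independent homogeneous linear forms
`f_1, …, f_k` such that `F` lies in the ℂ-subalgebra generated by `f_1, …, f_k`
(equivalently, `F` is a homogeneous polynomial of degree `m` in `f_1, …, f_k`). -/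
theorem exists_linear_forms_of_finrank_span_pderiv
    (n m k : ℕ) (hm : 1 ≤ m)
    (F : MvPolynomial (Fin n) ℂ) (hF : F ≠ 0) (hhom : F.IsHomogeneous m)
    (hk : Module.finrank ℂ
      (Submodule.span ℂ (Set.range fun i : Fin n => pderiv i F)) = k) :
    ∃ f : Fin k → MvPolynomial (Fin n) ℂ,
      LinearIndependent ℂ f ∧ (∀ i, (f i).IsHomogeneous 1) ∧
        F ∈ Algebra.adjoin ℂ (Set.range f) := by
  classical
  set lam : (Fin n → ℂ) →ₗ[ℂ] MvPolynomial (Fin n) ℂ :=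
    Fintype.linearCombination ℂ (fun i : Fin n => pderiv i F) with hlam
  have hrange : LinearMap.range lam
      = Submodule.span ℂ (Set.range fun i : Fin n => pderiv i F) := by
    apply le_antisymm
    · rintro _ ⟨v, rfl⟩
      rw [hlam, Fintype.linearCombination_apply]
      exact Submodule.sum_mem _ fun i _ =>
        Submodule.smul_mem _ _ (Submodule.subset_span ⟨i, rfl⟩)
    · rw [Submodule.span_le]
      rintro _ ⟨i, rfl⟩
      exact ⟨Pi.single i 1, by
        rw [hlam, Fintype.linearCombination_apply_single, one_smul]⟩
  set K := LinearMap.ker lam with hK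
  set d := Module.finrank ℂ K with hd
  have hkd : k + d = n := by
    have h1 := LinearMap.finrank_range_add_finrank_ker lam
    rw [hrange, hk, Module.finrank_fin_fun] at h1
    exact h1
  obtain ⟨W, hW⟩ := Submodule.exists_isCompl K
  have hfinW : Module.finrank ℂ W = k := by
    have h2 := Submodule.finrank_add_eq_of_isCompl hW
    rw [Module.finrank_fin_fun] at h2
    omega
  let bK : Module.Basis (Fin d) ℂ K := Module.finBasis ℂ K
  let bW : Module.Basis (Fin k) ℂ W := (Module.finBasis ℂ W).reindex (finCongr hfinW)
  let e : (Fin k ⊕ Fin d) ≃ Fin n := finSumFinEquiv.trans (finCongr hkd)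
  let b : Module.Basis (Fin n) ℂ (Fin n → ℂ) :=
    ((bW.prod bK).map (Submodule.prodEquivOfIsCompl W K hW.symm)).reindex e
  have hbK : ∀ s : Fin d, b (e (Sum.inr s)) ∈ K := by
    intro s
    have : b (e (Sum.inr s))
        = (Submodule.prodEquivOfIsCompl W K hW.symm) ((bW.prod bK) (Sum.inr s)) := by
      simp [b, Module.Basis.reindex_apply, Equiv.symm_apply_apply]
    rw [this, Submodule.coe_prodEquivOfIsCompl']
    have h1 : ((bW.prod bK) (Sum.inr s)).1 = 0 := Module.Basis.prod_apply_inr_fst _ _ _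
    have h2 : ((bW.prod bK) (Sum.inr s)).2 = bK s := Module.Basis.prod_apply_inr_snd _ _ _
    rw [h1, h2]
    simpa using (bK s).2
  let N : Matrix (Fin n) (Fin n) ℂ := (Pi.basisFun ℂ (Fin n)).toMatrix b
  have hNapp : ∀ i t, N i t = b t i := fun i t => by
    simp [N, Module.Basis.toMatrix_apply]
  letI : Invertible N := (Pi.basisFun ℂ (Fin n)).invertibleToMatrix b
  set G := PhiSub n N F with hG
  have hGd : ∀ s : Fin d, pderiv (e (Sum.inr s)) G = 0 := by
    intro s
    rw [hG, pderiv_PhiSub]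
    have : ∑ i, PhiSub n N (pderiv i F) * C (N i (e (Sum.inr s)))
        = PhiSub n N (lam (b (e (Sum.inr s)))) := by
      rw [hlam, Fintype.linearCombination_apply, map_sum]
      refine Finset.sum_congr rfl fun i _ => ?_
      rw [← hNapp i (e (Sum.inr s)), mul_comm, ← smul_eq_C_mul, ← map_smul]
    rw [this]
    have : lam (b (e (Sum.inr s))) = 0 := hbK s
    rw [this, map_zero]
  -- vars of G
  have hvars : (G.vars : Set (Fin n)) ⊆ Set.range (fun s : Fin k => e (Sum.inl s)) := by
    intro t ht
    rcases h : e.symm t with s | s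
    · exact ⟨s, by dsimp only; rw [← h, Equiv.apply_symm_apply]⟩
    · exfalso
      apply pderiv_ne_zero_of_mem_vars ht
      have h0 := hGd s
      rwa [← h, Equiv.apply_symm_apply] at h0
  have hGmem : G ∈ Algebra.adjoin ℂ
      (X '' (Set.range fun s : Fin k => e (Sum.inl s)) :
        Set (MvPolynomial (Fin n) ℂ)) := by
    rw [← supported_eq_adjoin_X]
    exact (mem_supported).2 hvars
  have hFrec : PhiSub n (⅟N) G = F := by
    rw [hG, PhiSub_comp, mul_invOf_self, PhiSub_one]
  -- the linear forms
  refine ⟨fun s => PhiSub n (⅟N) (X (e (Sum.inl s))), ?_, ?_, ?_⟩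
  · -- linear independence
    let L : (Fin n → ℂ) →ₗ[ℂ] MvPolynomial (Fin n) ℂ :=
      Fintype.linearCombination ℂ (fun j : Fin n => (X j : MvPolynomial (Fin n) ℂ))
    have hLker : LinearMap.ker L = ⊥ := by
      rw [LinearMap.ker_eq_bot']
      intro v hv
      funext t
      have hv' : (Fintype.linearCombination ℂ
          fun j : Fin n => (X j : MvPolynomial (Fin n) ℂ)) v = 0 := hv
      have := congrArg (coeff (Finsupp.single t 1)) hv'
      simp only [Fintype.linearCombination_apply, coeff_zero] at this
      simpa [coeff_sum, coeff_smul, coeff_X', Finsupp.single_left_inj (one_ne_zero (α := ℕ))]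
        using this
    have hrows : LinearIndependent ℂ (fun t : Fin n => (⅟N) t) := by
      have hker : LinearMap.ker ((⅟N).vecMulLinear) = ⊥ :=
        LinearMap.ker_eq_bot.mpr (by
          have := Matrix.vecMul_injective_of_invertible (⅟N)
          intro x y hxy
          exact this (by simpa [Matrix.vecMulLinear_apply] using hxy))
      have h1 := ((Pi.basisFun ℂ (Fin n)).linearIndependent).map'
        ((⅟N).vecMulLinear) hker
      have heq : (fun t : Fin n => (⅟N) t)
          = (⅟N).vecMulLinear ∘ (Pi.basisFun ℂ (Fin n)) := by
        funext t j
        simp [Matrix.vecMulLinear_apply, Matrix.vecMul, dotProduct,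
          Pi.single_apply]
      rw [heq]
      exact h1
    have hLf : ∀ t : Fin n, PhiSub n (⅟N) (X t) = L ((⅟N) t) := by
      intro t
      rw [PhiSub_X, Fintype.linearCombination_apply]
      exact Finset.sum_congr rfl fun j _ => (smul_eq_C_mul _ _).symm
    have h2 := hrows.comp (fun s : Fin k => e (Sum.inl s))
      (fun a c hac => Sum.inl_injective (e.injective hac))
    have h3 := h2.map' L hLker
    have heq2 : (fun s : Fin k => PhiSub n (⅟N) (X (e (Sum.inl s))))
        = L ∘ ((fun t : Fin n => (⅟N) t) ∘ fun s : Fin k => e (Sum.inl s)) := by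
      funext s
      simp only [Function.comp_apply]
      exact hLf _
    rw [heq2]
    exact h3
  · -- homogeneous of degree 1
    intro s
    dsimp only
    rw [PhiSub_X]
    exact IsHomogeneous.sum _ _ _ fun j _ => isHomogeneous_C_mul_X _ _
  · -- membership
    have hmem : F ∈ (Algebra.adjoin ℂ
        (X '' (Set.range fun s : Fin k => e (Sum.inl s)) :
          Set (MvPolynomial (Fin n) ℂ))).map (PhiSub n (⅟N)) :=
      ⟨G, hGmem, hFrec⟩
    rw [AlgHom.map_adjoin] at hmem
    refine Algebra.adjoin_mono ?_ hmem
    rintro - ⟨-, ⟨-, ⟨s, rfl⟩, rfl⟩, rfl⟩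
    exact ⟨s, rfl⟩
end

section
/- (Lemma 4.5) For each v = (v_1, …, v_n) ∈ ℂ^n, let σ_v : S → S be the ℂ-algebra endomorphism determined by σ_v(w_0) = w_0, σ_v(w_i) = w_i + v_i·w_0 for 1 ≤ i ≤ n, and σ_v(w_{n+j}) = w_{n+j} + B_j + Q_j(v_1, …, v_n)·w_0 for 1 ≤ j ≤ c, where B_j = Q_j(w_1 + v_1, …, w_n + v_n) − Q_j(w_1, …, w_n) − Q_j(v_1, …, v_n) is the polarization of Q_j (a linear form in w_1, …, w_n). Then σ_v(f_j) = f_j for every 1 ≤ j ≤ c; in particular the ideal (f_1, …, f_c) and the subvariety Y are stable under the action of the vector group W = ℂ^n. -/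
open MvPolynomial

noncomputable section

/-- The polynomial ring `S = ℂ[w_0, w_1, …, w_{n+c}]`. -/
abbrev S2 (n c : ℕ) := MvPolynomial (Fin (n + c + 1)) ℂ

/-- The index of the variable `w_0`. -/
def wVar0 (n c : ℕ) : Fin (n + c + 1) := ⟨0, by omega⟩

/-- The index of the variable `w_i`, `1 ≤ i ≤ n`. -/
def wVarX (n c : ℕ) (i : Fin n) : Fin (n + c + 1) := ⟨(i : ℕ) + 1, by have := i.isLt; omega⟩

/-- The index of the variable `w_{n+j}`, `1 ≤ j ≤ c`. -/
def wVarQ (n c : ℕ) (j : Fin c) : Fin (n + c + 1) := ⟨n + 1 + (j : ℕ), by have := j.isLt; omega⟩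

/-- The quadric `f_j = w_0 · w_{n+j} − Q_j(w_1, …, w_n)`. -/
def fq (n c : ℕ) (Q : Fin c → MvPolynomial (Fin n) ℂ) (j : Fin c) : S2 n c :=
  X (wVar0 n c) * X (wVarQ n c j) - rename (wVarX n c) (Q j)

/-- The ℂ-algebra homomorphism `φ : S → ℂ[t, x_1, …, x_n]` sending
`w_0 ↦ t²`, `w_i ↦ t·x_i` and `w_{n+j} ↦ Q_j(x_1, …, x_n)`; here the variable
`none` plays the role of `t` and `some i` the role of `x_i`. -/
def phi2 (n c : ℕ) (Q : Fin c → MvPolynomial (Fin n) ℂ) :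
    S2 n c →ₐ[ℂ] MvPolynomial (Option (Fin n)) ℂ :=
  aeval (fun v : Fin (n + c + 1) =>
    if h0 : (v : ℕ) = 0 then X none ^ 2
    else if h : (v : ℕ) ≤ n then X none * X (some ⟨(v : ℕ) - 1, by omega⟩)
    else rename some (Q ⟨(v : ℕ) - (n + 1), by have := v.isLt; omega⟩))

/-- The ℂ-algebra endomorphism `σ_v` of `S` determined by `w_0 ↦ w_0`,
`w_i ↦ w_i + v_i·w_0` (`1 ≤ i ≤ n`) and
`w_{n+j} ↦ w_{n+j} + B_j + Q_j(v)·w_0` (`1 ≤ j ≤ c`), where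
`B_j = Q_j(w_1 + v_1, …, w_n + v_n) − Q_j(w_1, …, w_n) − Q_j(v)` is the polarization
of `Q_j`. -/
def sigmaV (n c : ℕ) (Q : Fin c → MvPolynomial (Fin n) ℂ) (v : Fin n → ℂ) :
    S2 n c →ₐ[ℂ] S2 n c :=
  aeval (fun u : Fin (n + c + 1) =>
    if h0 : (u : ℕ) = 0 then X (wVar0 n c)
    else if h : (u : ℕ) ≤ n then
      X u + C (v ⟨(u : ℕ) - 1, by omega⟩) * X (wVar0 n c)
    else
      letI j : Fin c := ⟨(u : ℕ) - (n + 1), by have := u.isLt; omega⟩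
      X u
        + (aeval (fun i : Fin n => X (wVarX n c i) + C (v i)) (Q j)
            - rename (wVarX n c) (Q j) - C (eval v (Q j)))
        + C (eval v (Q j)) * X (wVar0 n c))

section Aux

lemma degree_single_aux {α : Type*} (a : α) (m : ℕ) :
    Finsupp.degree (Finsupp.single a m) = m := by
  classical
  rw [Finsupp.degree_eq_weight_one, Finsupp.weight_apply, Finsupp.sum_single_index] <;> simp

lemma degree_add_aux {α : Type*} (f g : α →₀ ℕ) :
    Finsupp.degree (f + g) = Finsupp.degree f + Finsupp.degree g := by
  simp [Finsupp.degree_eq_weight_one, map_add]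

lemma degree_one_aux {n : ℕ} (d : Fin n →₀ ℕ) (hd : Finsupp.degree d = 1) :
    ∃ i, d = Finsupp.single i 1 := by
  classical
  induction d using Finsupp.induction with
  | zero => simp at hd
  | single_add a b f ha hb ih =>
    rw [degree_add_aux, degree_single_aux] at hd
    have hb1 : b = 1 := by omega
    have hf : Finsupp.degree f = 0 := by omega
    rw [Finsupp.degree_eq_zero_iff] at hf
    exact ⟨a, by simp [hb1, hf]⟩

lemma degree_two_aux {n : ℕ} (d : Fin n →₀ ℕ) (hd : Finsupp.degree d = 2) :
    ∃ i k, d = Finsupp.single i 1 + Finsupp.single k 1 := by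
  classical
  induction d using Finsupp.induction with
  | zero => simp at hd
  | single_add a b f ha hb ih =>
    rw [degree_add_aux, degree_single_aux] at hd
    rcases Nat.lt_or_ge b 2 with hb2 | hb2
    · have hb1 : b = 1 := by omega
      have hf : Finsupp.degree f = 1 := by omega
      obtain ⟨k, hk⟩ := degree_one_aux f hf
      exact ⟨a, k, by rw [hb1, hk]⟩
    · have hb2' : b = 2 := by
        have := Finsupp.degree_eq_zero_iff f
        omega
      have hf : Finsupp.degree f = 0 := by omega
      rw [Finsupp.degree_eq_zero_iff] at hf
      refine ⟨a, a, ?_⟩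
      rw [hb2', hf, add_zero, ← Finsupp.single_add]

/-- Key polarization identity: for a homogeneous degree 2 polynomial `P`,
`P(y + v·w₀) = P(y) + w₀·(P(y+v) − P(y) − P(v)) + w₀²·P(v)`. -/
lemma aeval_shift_homog (n c : ℕ) (v : Fin n → ℂ) (P : MvPolynomial (Fin n) ℂ)
    (hP : P.IsHomogeneous 2) :
    aeval (fun i => X (wVarX n c i) + C (v i) * X (wVar0 n c)) P
      = rename (wVarX n c) P
        + X (wVar0 n c) *
          (aeval (fun i => X (wVarX n c i) + C (v i)) P - rename (wVarX n c) P
            - C (eval v P))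
        + X (wVar0 n c) ^ 2 * C (eval v P) := by
  classical
  have hP' : P ∈ Submodule.span ℂ
      ((fun d => AddMonoidAlgebra.single d (1 : ℂ)) '' {d : Fin n →₀ ℕ | Finsupp.degree d = 2}) := by
    rw [← AddMonoidAlgebra.supported_eq_span_single]
    rw [← mem_homogeneousSubmodule, homogeneousSubmodule_eq_finsupp_supported] at hP
    exact hP
  clear hP
  induction hP' using Submodule.span_induction with
  | mem p hp =>
    obtain ⟨d, hd, rfl⟩ := hp
    obtain ⟨i, k, rfl⟩ := degree_two_aux d hd
    have hXX : (AddMonoidAlgebra.single (Finsupp.single i 1 + Finsupp.single k 1) (1 : ℂ)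
        : MvPolynomial (Fin n) ℂ) = X i * X k := by
      rw [X, X, monomial_mul, one_mul]
      rfl
    beta_reduce
    rw [hXX]
    simp only [map_mul, aeval_X, rename_X, eval_X, map_add]
    ring
  | zero => simp
  | add p q _ _ hp hq =>
    simp only [map_add, hp, hq]
    ring
  | smul r p _ hp =>
    simp only [smul_eq_C_mul, map_mul, aeval_C, algebraMap_eq, eval_C, rename_C, hp]
    ring

/-- (Lemma 4.5) For every `v ∈ ℂ^n` the endomorphism `σ_v` fixes each quadric `f_j`;
in particular the ideal `(f_1, …, f_c)` (hence the subvariety `Y`) is stable under the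
action of the vector group `W = ℂ^n`. -/
theorem sigmaV_fixes_fq
    (n c : ℕ) (hn : 1 ≤ n) (hc : 1 ≤ c)
    (Q : Fin c → MvPolynomial (Fin n) ℂ)
    (hhom : ∀ j, (Q j).IsHomogeneous 2)
    (hli : LinearIndependent ℂ Q)
    (v : Fin n → ℂ) :
    (∀ j : Fin c, sigmaV n c Q v (fq n c Q j) = fq n c Q j) ∧
      Ideal.map (sigmaV n c Q v) (Ideal.span (Set.range (fq n c Q)))
        = Ideal.span (Set.range (fq n c Q)) := by
  have hfix : ∀ j : Fin c, sigmaV n c Q v (fq n c Q j) = fq n c Q j := by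
    intro j
    have h0 : sigmaV n c Q v (X (wVar0 n c)) = X (wVar0 n c) := by
      rw [sigmaV, aeval_X]
      simp [wVar0]
    have hQ : sigmaV n c Q v (X (wVarQ n c j)) =
        X (wVarQ n c j)
          + (aeval (fun i : Fin n => X (wVarX n c i) + C (v i)) (Q j)
              - rename (wVarX n c) (Q j) - C (eval v (Q j)))
          + C (eval v (Q j)) * X (wVar0 n c) := by
      rw [sigmaV, aeval_X]
      have h1 : ((wVarQ n c j : Fin (n + c + 1)) : ℕ) = n + 1 + (j : ℕ) := rfl
      rw [dif_neg (by omega), dif_neg (by omega)]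
      have h2 : (⟨((wVarQ n c j : Fin (n + c + 1)) : ℕ) - (n + 1), by
          have := (wVarQ n c j).isLt; omega⟩ : Fin c) = j := by
        ext
        simp [h1]
      rw [h2]
    have hR : sigmaV n c Q v (rename (wVarX n c) (Q j)) =
        aeval (fun i => X (wVarX n c i) + C (v i) * X (wVar0 n c)) (Q j) := by
      rw [sigmaV, aeval_rename]
      refine congrArg (fun t => aeval t (Q j)) (funext fun i => ?_)
      simp only [Function.comp_apply]
      have h1 : ((wVarX n c i : Fin (n + c + 1)) : ℕ) = (i : ℕ) + 1 := rfl
      rw [dif_neg (by rw [h1]; omega), dif_pos (by rw [h1]; have := i.isLt; omega)]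
      have h2 : (⟨((wVarX n c i : Fin (n + c + 1)) : ℕ) - 1, by
          have := (wVarX n c i).isLt; omega⟩ : Fin n) = i := by
        ext
        simp [h1]
      rw [h2]
    rw [fq, map_sub, map_mul, h0, hQ, hR, aeval_shift_homog n c v (Q j) (hhom j)]
    ring
  refine ⟨hfix, ?_⟩
  have hcomp : (⇑(sigmaV n c Q v) ∘ fq n c Q) = fq n c Q := funext hfix
  rw [Ideal.map_span, ← Set.range_comp, hcomp]
end Aux
end
end

section
/- (Proposition 4.7(2): L_x(M(F)) = L_x(Y) at x = [1:0:⋯:0]) Let v = (v_0, v_1, …, v_{n+c}) ∈ ℂ^{n+c+1} satisfy v_{n+j} = 0 and Q_j(v_1, …, v_n) = 0 for all 1 ≤ j ≤ c. Then every polynomial g ∈ I = ker φ vanishes at the point p·e_0 + q·v for all p, q ∈ ℂ, where e_0 = (1, 0, …, 0); i.e., every line through [1:0:⋯:0] contained in Y is contained in M(F). -/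
open MvPolynomial

noncomputable section

lemma eval_scale' {σ : Type*} (p : MvPolynomial σ ℂ) (d : ℕ) (hp : p.IsHomogeneous d)
    (r : ℂ) (x : σ → ℂ) : eval (fun i => r * x i) p = r ^ d * eval x p := by
  rw [eval_eq, eval_eq, Finset.mul_sum]
  refine Finset.sum_congr rfl fun e he => ?_
  have hd : ∑ i ∈ e.support, e i = d := by
    have := hp (mem_support_iff.mp he)
    simpa [Finsupp.weight, Finsupp.linearCombination, Finsupp.sum] using this
  rw [← hd]
  simp [mul_pow, Finset.prod_mul_distrib, Finset.prod_pow_eq_pow_sum]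
  ring

lemma eval_aeval' {m : ℕ} {τ : Type*} {A : Type*} [CommRing A]
    (f : Fin m → MvPolynomial τ A) (g : MvPolynomial (Fin m) A)
    (w : τ → A) : eval w (aeval f g) = eval (fun u => eval w (f u)) g := by
  rw [aeval_def, eval, eval₂_comp_left (eval₂Hom (RingHom.id A) w)]
  simp [eval₂Hom_C]
  rfl

lemma main_case (n c : ℕ)
    (Q : Fin c → MvPolynomial (Fin n) ℂ)
    (hhom : ∀ j, (Q j).IsHomogeneous 2)
    (v : Fin (n + c + 1) → ℂ)
    (hvw : ∀ j : Fin c, v (wVarQ n c j) = 0)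
    (hvQ : ∀ j : Fin c, eval (fun i : Fin n => v (wVarX n c i)) (Q j) = 0)
    (g : S2 n c) (hg : phi2 n c Q g = 0) (p q : ℂ)
    (hpq : p + q * v (wVar0 n c) ≠ 0) :
    eval (fun u : Fin (n + c + 1) => p * (if (u : ℕ) = 0 then 1 else 0) + q * v u) g = 0 := by
  obtain ⟨t, ht⟩ := IsAlgClosed.exists_pow_nat_eq (k := ℂ) (p + q * v (wVar0 n c)) two_pos
  have ht0 : t ≠ 0 := by
    intro h; apply hpq; rw [← ht, h]; ring
  set w : Option (Fin n) → ℂ := fun o => o.elim t (fun i => q / t * v (wVarX n c i)) with hw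
  have key : eval (fun u : Fin (n + c + 1) => p * (if (u : ℕ) = 0 then 1 else 0) + q * v u) g
      = eval w (phi2 n c Q g) := by
    rw [phi2, eval_aeval']
    refine congrArg (fun f => eval f g) ?_
    funext u
    by_cases h0 : (u : ℕ) = 0
    · have hu : u = wVar0 n c := Fin.ext h0
      rw [dif_pos h0, if_pos h0]
      have : eval w (X (R := ℂ) (none : Option (Fin n)) ^ 2) = t ^ 2 := by simp [hw]
      rw [this, ht, hu]; ring
    · by_cases h1 : (u : ℕ) ≤ n
      · have hu : wVarX n c ⟨(u : ℕ) - 1, by omega⟩ = u := Fin.ext (by simp [wVarX]; omega)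
        rw [dif_neg h0, dif_pos h1, if_neg h0]
        have : eval w (X (R := ℂ) (none : Option (Fin n)) *
            X (some ⟨(u : ℕ) - 1, by omega⟩)) =
            t * (q / t * v (wVarX n c ⟨(u : ℕ) - 1, by omega⟩)) := by simp [hw]
        rw [this, hu]
        field_simp
        ring
      · set j : Fin c := ⟨(u : ℕ) - (n + 1), by have := u.isLt; omega⟩ with hj
        have hu : u = wVarQ n c j := Fin.ext (by simp [wVarQ, hj]; omega)
        rw [dif_neg h0, dif_neg h1, if_neg h0, eval_rename]
        have hws : (w ∘ some) = fun i => q / t * v (wVarX n c i) := rfl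
        rw [hws, eval_scale' _ 2 (hhom j), hvQ j, hu, hvw j]
        ring
  rw [key, hg, map_zero]


/-- (Proposition 4.7(2): `L_x(M(F)) = L_x(Y)` at `x = [1:0:⋯:0]`) If
`v ∈ ℂ^{n+c+1}` satisfies `v_{n+j} = 0` and `Q_j(v_1, …, v_n) = 0` for all `j`,
then every polynomial `g ∈ I = ker φ` vanishes at `p·e_0 + q·v` for all `p, q ∈ ℂ`;
i.e. every line through `[1:0:⋯:0]` contained in `Y` is contained in `M(F)`. -/
theorem line_in_Y_contained_in_MF
    (n c : ℕ) (hn : 1 ≤ n) (hc : 1 ≤ c)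
    (Q : Fin c → MvPolynomial (Fin n) ℂ)
    (hhom : ∀ j, (Q j).IsHomogeneous 2)
    (hli : LinearIndependent ℂ Q)
    (v : Fin (n + c + 1) → ℂ)
    (hvw : ∀ j : Fin c, v (wVarQ n c j) = 0)
    (hvQ : ∀ j : Fin c, eval (fun i : Fin n => v (wVarX n c i)) (Q j) = 0) :
    ∀ g ∈ RingHom.ker (phi2 n c Q), ∀ p q : ℂ,
      eval (fun u : Fin (n + c + 1) => p * (if (u : ℕ) = 0 then 1 else 0) + q * v u) g = 0 := by
  intro g hg p q
  have hg' : phi2 n c Q g = 0 := hg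
  set P : Polynomial ℂ :=
    aeval (fun u : Fin (n + c + 1) =>
      Polynomial.C (q * v u) + Polynomial.C (if (u : ℕ) = 0 then (1:ℂ) else 0) * Polynomial.X) g
    with hP
  have hev : ∀ p' : ℂ, P.eval p'
      = eval (fun u : Fin (n + c + 1) => p' * (if (u : ℕ) = 0 then 1 else 0) + q * v u) g := by
    intro p'
    rw [hP, aeval_def, ← Polynomial.coe_evalRingHom,
      eval₂_comp_left (Polynomial.evalRingHom p')]
    have h1 : (Polynomial.evalRingHom p').comp (algebraMap ℂ (Polynomial ℂ)) = RingHom.id ℂ := by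
      ext x; simp
    rw [h1]
    show eval _ g = _
    refine congrArg (fun f => eval f g) ?_
    funext u
    by_cases h : (u : ℕ) = 0 <;> simp at h <;> simp [h] <;> ring
  have hPz : P = 0 := by
    apply Polynomial.eq_zero_of_infinite_isRoot
    apply Set.Infinite.mono (s := {-(q * v (wVar0 n c))}ᶜ)
    · intro x hx
      have hx' : x + q * v (wVar0 n c) ≠ 0 := by
        simp only [Set.mem_compl_iff, Set.mem_singleton_iff] at hx
        intro h; apply hx; linear_combination h
      simp only [Set.mem_setOf_eq, Polynomial.IsRoot, hev]
      exact main_case n c Q hhom v hvw hvQ g hg' x q hx'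
    · exact (Set.finite_singleton _).infinite_compl
  have := hev p
  rw [hPz] at this
  simpa using this.symm
end
end

section
/- (Theorem 4.8, (3) ⇒ (1)) If (Q_1, …, Q_c) is a regular sequence in ℂ[x_1, …, x_n], then I = ker φ equals the ideal (f_1, …, f_c) ⊆ S; in particular, M(F) ⊂ ℙ^{n+c} is a complete intersection of codimension c. -/
open MvPolynomial

noncomputable section

/-! ### Auxiliary general lemmas -/

lemma aux_aeval_scale {σ R : Type*} [CommRing R] (a : MvPolynomial σ R)
    {p : MvPolynomial σ R} {d : ℕ} (hp : p.IsHomogeneous d) :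
    aeval (fun i => a * X i) p = a ^ d * p := by
  conv_lhs => rw [p.as_sum]
  rw [map_sum]
  conv_rhs => rw [p.as_sum, Finset.mul_sum]
  refine Finset.sum_congr rfl fun m hm => ?_
  have hdm : (∑ i ∈ m.support, m i) = d := by
    have := hp (MvPolynomial.mem_support_iff.mp hm)
    simpa [Finsupp.weight_apply, Finsupp.sum] using this
  rw [aeval_monomial, monomial_eq]
  simp_rw [mul_pow]
  rw [Finsupp.prod_mul]
  have : (m.prod fun _ e => a ^ e) = a ^ d := by
    rw [Finsupp.prod, Finset.prod_pow_eq_pow_sum, hdm]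
  rw [this]
  simp only [algebraMap_eq]
  ring

lemma aux_mem_map_C_iff {σ R : Type*} [CommRing R] {I : Ideal R}
    {p : MvPolynomial σ R} :
    p ∈ I.map (C : R →+* MvPolynomial σ R) ↔ ∀ m, p.coeff m ∈ I := by
  classical
  constructor
  · intro h
    refine Submodule.span_induction (p := fun q _ => ∀ m, q.coeff m ∈ I) ?_ ?_ ?_ ?_ h
    · rintro x ⟨r, hr, rfl⟩ m
      rw [coeff_C]
      split <;> simp_all
    · simp
    · intro x y _ _ hx hy m; simpa [coeff_add] using I.add_mem (hx m) (hy m)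
    · intro a x _ hx m
      rw [smul_eq_mul, coeff_mul]
      exact Ideal.sum_mem I fun z _ => I.mul_mem_left _ (hx z.2)
  · intro h
    rw [p.as_sum]
    refine Ideal.sum_mem _ fun m hm => ?_
    rw [monomial_eq]
    exact Ideal.mul_mem_right _ _ (Ideal.mem_map_of_mem _ (h m))

/-! ### The splitting of variables -/

def eSplit (n c : ℕ) : Fin (n + c + 1) ≃ (Fin (c + 1) ⊕ Fin n) where
  toFun v :=
    if h : (v : ℕ) = 0 then Sum.inl ⟨0, by omega⟩
    else if h2 : (v : ℕ) ≤ n then Sum.inr ⟨(v : ℕ) - 1, by omega⟩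
    else Sum.inl ⟨(v : ℕ) - n, by have := v.isLt; omega⟩
  invFun s := Sum.elim
    (fun k : Fin (c + 1) => if h : (k : ℕ) = 0 then (⟨0, by omega⟩ : Fin (n + c + 1))
      else ⟨n + (k : ℕ), by have := k.isLt; omega⟩)
    (fun i : Fin n => (⟨(i : ℕ) + 1, by have := i.isLt; omega⟩ : Fin (n + c + 1))) s
  left_inv := by
    intro v
    have hv := v.isLt
    dsimp only
    split_ifs with h h2
    all_goals simp only [Sum.elim_inl, Sum.elim_inr]
    all_goals try split_ifs
    all_goals simp only [Sum.inl.injEq, Sum.inr.injEq, Fin.ext_iff, Fin.val_mk] at *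
    all_goals try omega
    all_goals simp_all
  right_inv := by
    intro s
    rcases s with k | i <;>
      [ (have hk := k.isLt); (have hi := i.isLt) ] <;>
      dsimp only [Sum.elim_inl, Sum.elim_inr]
    all_goals split_ifs
    all_goals try simp only [Sum.elim_inl, Sum.elim_inr]
    all_goals try split_ifs
    all_goals simp -failIfUnchanged only [Sum.inl.injEq, Sum.inr.injEq, Fin.ext_iff, Fin.val_mk] at *
    all_goals try omega
    all_goals simp_all
    all_goals try omega

lemma sumAlgEquiv_rename_inr' {S₁ S₂ : Type*} (q : MvPolynomial S₂ ℂ) :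
    (sumAlgEquiv ℂ S₁ S₂) (rename Sum.inr q) = C q := by
  have := AlgHom.congr_fun (sumAlgEquiv_comp_rename_inr ℂ S₁ S₂) q
  simpa [algebraMap_eq] using this

def PhiEq (n c : ℕ) : S2 n c ≃ₐ[ℂ] MvPolynomial (Fin (c + 1)) (MvPolynomial (Fin n) ℂ) :=
  (renameEquiv ℂ (eSplit n c)).trans (sumAlgEquiv ℂ (Fin (c + 1)) (Fin n))

section Main

variable {n c : ℕ} (Q : Fin c → MvPolynomial (Fin n) ℂ)

/-- `Q_j` viewed inside `S`. -/
def QS (j : Fin c) : S2 n c := rename (wVarX n c) (Q j)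

def KQ (jj : ℕ) : Ideal (S2 n c) :=
  Ideal.span {p | ∃ k : Fin c, (k : ℕ) < jj ∧ QS Q k = p}

def KF (jj : ℕ) : Ideal (S2 n c) :=
  Ideal.span {p | ∃ k : Fin c, (k : ℕ) < jj ∧ fq n c Q k = p}

def IQ (jj : ℕ) : Ideal (MvPolynomial (Fin n) ℂ) :=
  Ideal.span {q | ∃ k : Fin c, (k : ℕ) < jj ∧ Q k = q}

lemma eSplit_wVarX (i : Fin n) : eSplit n c (wVarX n c i) = Sum.inr i := by
  have h1 : ((wVarX n c i : Fin (n + c + 1)) : ℕ) = (i : ℕ) + 1 := rfl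
  simp only [eSplit, Equiv.coe_fn_mk, h1]
  rw [dif_neg (by omega), dif_pos (by have := i.isLt; omega)]
  exact congrArg Sum.inr (Fin.ext (by simp))

lemma PhiEq_QS (j : Fin c) : PhiEq n c (QS Q j) = C (Q j) := by
  unfold PhiEq QS
  rw [AlgEquiv.trans_apply, renameEquiv_apply, rename_rename]
  have he : ((eSplit n c) ∘ wVarX n c) = Sum.inr := funext (fun i => eSplit_wVarX i)
  rw [he]
  exact sumAlgEquiv_rename_inr' _

/-- Transfer of the regular-sequence hypothesis. -/
lemma regQ (hreg : RingTheory.Sequence.IsWeaklyRegular (MvPolynomial (Fin n) ℂ) (List.ofFn Q))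
    (jj : ℕ) (hjj : jj < c) (x : MvPolynomial (Fin n) ℂ)
    (hx : x * Q ⟨jj, hjj⟩ ∈ IQ Q jj) : x ∈ IQ Q jj := by
  have hlen : jj < (List.ofFn Q).length := by simpa using hjj
  have h := hreg.regular_mod_prev jj hlen
  have hof : Ideal.ofList ((List.ofFn Q).take jj) = IQ Q jj := by
    show Ideal.span _ = Ideal.span _
    congr 1
    ext a
    simp only [Set.mem_setOf_eq, List.mem_iff_getElem]
    constructor
    · rintro ⟨i, hi, rfl⟩
      have hi' : i < jj ∧ i < c := by
        simpa [Nat.lt_min] using hi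
      refine ⟨⟨i, hi'.2⟩, hi'.1, ?_⟩
      simp [List.getElem_take, List.getElem_ofFn]
    · rintro ⟨k, hk, rfl⟩
      refine ⟨(k : ℕ), by simp only [List.length_take, List.length_ofFn, Nat.lt_min]; exact ⟨hk, k.isLt⟩, ?_⟩
      simp [List.getElem_take, List.getElem_ofFn]
  have hIQ : (Ideal.ofList ((List.ofFn Q).take jj) • ⊤ :
      Submodule (MvPolynomial (Fin n) ℂ) (MvPolynomial (Fin n) ℂ)) = IQ Q jj := by
    rw [hof, Ideal.smul_eq_mul, Ideal.mul_top]
  rw [hIQ] at h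
  have hget : (List.ofFn Q)[jj]'hlen = Q ⟨jj, hjj⟩ := by
    simp [List.getElem_ofFn]
  rw [hget] at h
  have h0 : Q ⟨jj, hjj⟩ • (Submodule.Quotient.mk x :
      MvPolynomial (Fin n) ℂ ⧸ (IQ Q jj : Submodule (MvPolynomial (Fin n) ℂ) _)) =
      Q ⟨jj, hjj⟩ • (0 : _) := by
    rw [smul_zero, ← Submodule.Quotient.mk_smul, Submodule.Quotient.mk_eq_zero]
    rwa [smul_eq_mul, mul_comm]
  have := h h0
  rwa [Submodule.Quotient.mk_eq_zero] at this

/-- Regularity of the `Q_j` inside the big ring `S`. -/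
lemma regQS (hreg : RingTheory.Sequence.IsWeaklyRegular (MvPolynomial (Fin n) ℂ) (List.ofFn Q))
    (jj : ℕ) (hjj : jj < c) (p : S2 n c)
    (hp : p * QS Q ⟨jj, hjj⟩ ∈ KQ Q jj) : p ∈ KQ Q jj := by
  set Φ := PhiEq n c with hΦ
  have hmap : Ideal.map Φ (KQ Q jj) =
      Ideal.map (C : MvPolynomial (Fin n) ℂ →+* _) (IQ Q jj) := by
    unfold KQ IQ
    rw [Ideal.map_span, Ideal.map_span]
    congr 1
    ext a
    constructor
    · rintro ⟨_, ⟨k, hk, rfl⟩, rfl⟩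
      exact ⟨Q k, ⟨k, hk, rfl⟩, (PhiEq_QS Q k).symm ▸ rfl⟩
    · rintro ⟨_, ⟨k, hk, rfl⟩, rfl⟩
      exact ⟨QS Q k, ⟨k, hk, rfl⟩, PhiEq_QS Q k⟩
  have h1 : Φ (p * QS Q ⟨jj, hjj⟩) ∈ Ideal.map Φ (KQ Q jj) := Ideal.mem_map_of_mem _ hp
  rw [map_mul, PhiEq_QS, hmap] at h1
  have h2 : ∀ m, (Φ p).coeff m ∈ IQ Q jj := by
    intro m
    have hm := aux_mem_map_C_iff.mp h1 m
    rw [mul_comm, coeff_C_mul] at hm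
    rw [mul_comm] at hm
    exact regQ Q hreg jj hjj _ hm
  have h3 : Φ p ∈ Ideal.map Φ (KQ Q jj) := by
    rw [hmap]; exact aux_mem_map_C_iff.mpr h2
  have h4 : p ∈ Ideal.comap Φ (Ideal.map Φ (KQ Q jj)) := h3
  rwa [Ideal.comap_map_of_bijective _ (AlgEquiv.bijective Φ)] at h4

/-! ### The substitution `w_0 ↦ 0` -/

def psi0 (n c : ℕ) : S2 n c →ₐ[ℂ] S2 n c :=
  aeval (fun v => if v = wVar0 n c then 0 else X v)

lemma psi0_X0 : psi0 n c (X (wVar0 n c)) = 0 := by simp [psi0]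

lemma psi0_rename (q : MvPolynomial (Fin n) ℂ) :
    psi0 n c (rename (wVarX n c) q) = rename (wVarX n c) q := by
  have h : (psi0 n c).comp
      (rename (wVarX n c) : MvPolynomial (Fin n) ℂ →ₐ[ℂ] S2 n c) = rename (wVarX n c) := by
    apply MvPolynomial.algHom_ext
    intro i
    have : wVarX n c i ≠ wVar0 n c := by
      simp [wVarX, wVar0, Fin.ext_iff]
    simp [psi0, this]
  exact AlgHom.congr_fun h q

lemma psi0_fq (j : Fin c) : psi0 n c (fq n c Q j) = - QS Q j := by
  rw [fq, map_sub, map_mul, psi0_X0, zero_mul, zero_sub]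
  rw [psi0_rename]
  rfl

lemma sub_psi0_mem (p : S2 n c) :
    p - psi0 n c p ∈ Ideal.span {X (wVar0 n c)} := by
  have h : (Ideal.Quotient.mkₐ ℂ (Ideal.span {X (wVar0 n c)})).comp (psi0 n c) =
      Ideal.Quotient.mkₐ ℂ (Ideal.span {X (wVar0 n c)}) := by
    apply MvPolynomial.algHom_ext
    intro v
    by_cases hv : v = wVar0 n c
    · subst hv
      simp only [AlgHom.comp_apply, psi0_X0, map_zero]
      symm
      rw [Ideal.Quotient.mkₐ_eq_mk, Ideal.Quotient.eq_zero_iff_mem]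
      exact Ideal.subset_span rfl
    · simp [psi0, hv]
  have h2 := AlgHom.congr_fun h p
  have h3 : Ideal.Quotient.mk (Ideal.span {X (wVar0 n c)}) (p - psi0 n c p) = 0 := by
    rw [RingHom.map_sub]
    rw [Ideal.Quotient.mkₐ_eq_mk] at h2
    rw [show (Ideal.Quotient.mk (Ideal.span {X (wVar0 n c)})) (psi0 n c p) = _ from h2]
    exact sub_self _
  rwa [Ideal.Quotient.eq_zero_iff_mem] at h3


lemma KF_zero : KF Q 0 = ⊥ := by
  unfold KF
  rw [show {p : S2 n c | ∃ k : Fin c, (k : ℕ) < 0 ∧ fq n c Q k = p} = ∅ by ext; simp,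
    Ideal.span_empty]

lemma KF_mono {jj : ℕ} : KF Q jj ≤ KF Q (jj + 1) := by
  apply Ideal.span_mono
  rintro a ⟨k, hk, rfl⟩
  exact ⟨k, Nat.lt_succ_of_lt hk, rfl⟩

lemma KF_succ (jj : ℕ) (hjj : jj < c) :
    KF Q (jj + 1) = KF Q jj ⊔ Ideal.span {fq n c Q ⟨jj, hjj⟩} := by
  unfold KF
  rw [← Ideal.span_union]
  congr 1
  ext a
  simp only [Set.mem_setOf_eq, Set.mem_union, Set.mem_singleton_iff]
  constructor
  · rintro ⟨k, hk, rfl⟩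
    rcases Nat.lt_succ_iff_lt_or_eq.mp hk with h | h
    · exact Or.inl ⟨k, h, rfl⟩
    · exact Or.inr (by rw [show k = ⟨jj, hjj⟩ from Fin.ext h])
  · rintro (⟨k, hk, rfl⟩ | rfl)
    · exact ⟨k, Nat.lt_succ_of_lt hk, rfl⟩
    · exact ⟨⟨jj, hjj⟩, Nat.lt_succ_self _, rfl⟩

lemma KQ_le (jj : ℕ) : KQ Q jj ≤ Ideal.span {X (wVar0 n c)} ⊔ KF Q jj := by
  unfold KQ
  rw [Ideal.span_le]
  rintro a ⟨k, hk, rfl⟩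
  have hQS : QS Q k = X (wVar0 n c) * X (wVarQ n c k) - fq n c Q k := by
    rw [fq, QS]; ring
  rw [hQS]
  refine Submodule.sub_mem _ ?_ ?_
  · exact Ideal.mem_sup_left (Ideal.mem_span_singleton.mpr ⟨X (wVarQ n c k), rfl⟩)
  · exact Ideal.mem_sup_right (Ideal.subset_span ⟨k, hk, rfl⟩)

/-- `w_0` is a non-zero-divisor modulo `(f_1, …, f_jj)`. -/
lemma X0_reg (hreg : RingTheory.Sequence.IsWeaklyRegular (MvPolynomial (Fin n) ℂ) (List.ofFn Q)) :
    ∀ jj : ℕ, jj ≤ c → ∀ g : S2 n c, X (wVar0 n c) * g ∈ KF Q jj → g ∈ KF Q jj := by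
  intro jj
  induction jj with
  | zero =>
    intro _ g hg
    rw [KF_zero] at hg ⊢
    rw [Ideal.mem_bot] at hg ⊢
    rcases mul_eq_zero.mp hg with h | h
    · exact absurd h (MvPolynomial.X_ne_zero _)
    · exact h
  | succ jj ih =>
    intro hjc g hg
    have hjj : jj < c := hjc
    set fj := fq n c Q ⟨jj, hjj⟩ with hfj
    rw [KF_succ Q jj hjj] at hg
    obtain ⟨u, hu, v, hv, huv⟩ := Submodule.mem_sup.mp hg
    obtain ⟨h, rfl⟩ := Ideal.mem_span_singleton'.mp hv
    have hmem : h * fj ∈ Ideal.span {X (wVar0 n c)} ⊔ KF Q jj := by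
      have heq : h * fj = X (wVar0 n c) * g - u := by linear_combination huv
      rw [heq]
      refine Submodule.sub_mem _ ?_ (Ideal.mem_sup_right hu)
      exact Ideal.mem_sup_left (Ideal.mem_span_singleton.mpr ⟨g, rfl⟩)
    have hpsi : psi0 n c h * QS Q ⟨jj, hjj⟩ ∈ KQ Q jj := by
      have h1 : psi0 n c (h * fj) ∈
          Ideal.map (psi0 n c) (Ideal.span {X (wVar0 n c)} ⊔ KF Q jj) :=
        Ideal.mem_map_of_mem _ hmem
      have h2 : Ideal.map (psi0 n c) (Ideal.span {X (wVar0 n c)} ⊔ KF Q jj) ≤ KQ Q jj := by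
        unfold KF
        rw [← Ideal.span_union, Ideal.map_span, Ideal.span_le]
        rintro a ⟨b, hb, rfl⟩
        rcases hb with rfl | ⟨k, hk, rfl⟩
        · rw [psi0_X0]; exact Submodule.zero_mem _
        · rw [psi0_fq]
          exact neg_mem (Ideal.subset_span ⟨k, hk, rfl⟩)
      have h3 := h2 h1
      rw [map_mul, hfj, psi0_fq, mul_neg] at h3
      simpa using neg_mem h3
    have hKQ : psi0 n c h ∈ KQ Q jj := regQS Q hreg jj hjj _ hpsi
    have hh : h ∈ Ideal.span {X (wVar0 n c)} ⊔ KF Q jj := by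
      have h5 : h = (h - psi0 n c h) + psi0 n c h := by ring
      rw [h5]
      exact add_mem (Ideal.mem_sup_left (sub_psi0_mem _)) (KQ_le Q jj hKQ)
    obtain ⟨y, hy, u', hu', hyu⟩ := Submodule.mem_sup.mp hh
    obtain ⟨e, rfl⟩ := Ideal.mem_span_singleton'.mp hy
    have hgoal : X (wVar0 n c) * (g - e * fj) ∈ KF Q jj := by
      have heq2 : X (wVar0 n c) * (g - e * fj) = u + u' * fj := by
        have hh2 : h = e * X (wVar0 n c) + u' := hyu.symm
        rw [hh2] at huv
        linear_combination -huv
      rw [heq2]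
      exact add_mem hu (Ideal.mul_mem_right _ _ hu')
    have hgmem := ih (le_of_lt hjc) _ hgoal
    have hfjmem : fj ∈ KF Q (jj + 1) :=
      Ideal.subset_span ⟨⟨jj, hjj⟩, Nat.lt_succ_self _, rfl⟩
    have h6 : g = (g - e * fj) + e * fj := by ring
    rw [h6]
    exact add_mem (KF_mono Q hgmem) (Ideal.mul_mem_left _ _ hfjmem)


/-! ### Computations with `φ` -/

lemma phi2_X0 : phi2 n c Q (X (wVar0 n c)) = X none ^ 2 := by
  unfold phi2
  rw [aeval_X]
  exact dif_pos rfl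

lemma phi2_XQ (j : Fin c) : phi2 n c Q (X (wVarQ n c j)) = rename some (Q j) := by
  unfold phi2
  rw [aeval_X]
  have hval : ((wVarQ n c j : Fin (n + c + 1)) : ℕ) = n + 1 + (j : ℕ) := rfl
  rw [dif_neg (by omega), dif_neg (by omega)]
  exact congrArg _ (congrArg Q (Fin.ext (by simp only [Fin.val_mk, hval]; omega)))

lemma phi2_rename (q : MvPolynomial (Fin n) ℂ) :
    phi2 n c Q (rename (wVarX n c) q) =
      aeval (fun i : Fin n => (X none : MvPolynomial (Option (Fin n)) ℂ) * X (some i)) q := by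
  unfold phi2
  rw [aeval_rename]
  refine congrArg (fun f : Fin n → MvPolynomial (Option (Fin n)) ℂ => (aeval f) q)
    (funext fun i => ?_)
  simp only [Function.comp_apply]
  have hval : ((wVarX n c i : Fin (n + c + 1)) : ℕ) = (i : ℕ) + 1 := rfl
  rw [dif_neg (by omega), dif_pos (by rw [hval]; have := i.isLt; omega)]
  exact congrArg _ (congrArg X (congrArg some (Fin.ext (by simp only [Fin.val_mk, hval]; omega))))

lemma phi2_QS (hhom : ∀ j, (Q j).IsHomogeneous 2) (j : Fin c) :
    phi2 n c Q (QS Q j) = X none ^ 2 * rename some (Q j) := by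
  rw [QS, phi2_rename]
  have hfun : (fun i : Fin n => (X none : MvPolynomial (Option (Fin n)) ℂ) * X (some i)) =
      (fun v : Option (Fin n) => (X none : MvPolynomial (Option (Fin n)) ℂ) * X v) ∘ some := rfl
  rw [hfun, ← aeval_rename]
  exact aux_aeval_scale _ ((hhom j).rename_isHomogeneous)

lemma phi2_fq (hhom : ∀ j, (Q j).IsHomogeneous 2) (j : Fin c) :
    phi2 n c Q (fq n c Q j) = 0 := by
  rw [fq, map_sub, map_mul, phi2_X0, phi2_XQ]
  rw [show (rename (wVarX n c)) (Q j) = QS Q j from rfl, phi2_QS Q hhom]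
  exact sub_self _


set_option maxHeartbeats 2000000 in
/-- The key reduction: for a homogeneous `g` with `φ(g) = 0`, `w_0^i · g` lies in the ideal. -/
lemma X0_pow_mem (i : ℕ) (g : S2 n c) (hgh : g.IsHomogeneous i)
    (hg0 : phi2 n c Q g = 0) :
    X (wVar0 n c) ^ i * g ∈ KF Q c := by
  set J := KF Q c with hJ
  set optm : Option (Fin n) → Fin (n + c + 1) := fun o => o.elim (wVar0 n c) (wVarX n c)
    with hoptm
  have hcomp : (Ideal.Quotient.mkₐ ℂ J).comp
      ((rename optm : MvPolynomial (Option (Fin n)) ℂ →ₐ[ℂ] S2 n c).comp (phi2 n c Q)) =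
      (Ideal.Quotient.mkₐ ℂ J).comp
        (aeval (fun v : Fin (n + c + 1) => X (wVar0 n c) * X v)) := by
    apply MvPolynomial.algHom_ext
    intro v
    simp only [AlgHom.comp_apply, aeval_X]
    by_cases h0 : (v : ℕ) = 0
    · have hv : v = wVar0 n c := Fin.ext h0
      rw [hv, phi2_X0, map_pow, rename_X]
      rw [show optm none = wVar0 n c from rfl, pow_two]
    · by_cases h1 : (v : ℕ) ≤ n
      · have hv : v = wVarX n c ⟨(v : ℕ) - 1, by omega⟩ :=
          Fin.ext (by simp only [wVarX, Fin.val_mk]; omega)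
        have hphi : phi2 n c Q (X v) =
            X none * X (some ⟨(v : ℕ) - 1, by omega⟩) := by
          unfold phi2; rw [aeval_X, dif_neg h0, dif_pos h1]
        rw [hphi, map_mul, rename_X, rename_X]
        have h2 : (X (optm (some ⟨(v : ℕ) - 1, by omega⟩)) : S2 n c) = X v := by
          show (X (wVarX n c ⟨(v : ℕ) - 1, by omega⟩) : S2 n c) = X v
          rw [← hv]
        rw [show optm none = wVar0 n c from rfl, h2]
      · set k : Fin c := ⟨(v : ℕ) - (n + 1), by have := v.isLt; omega⟩ with hk
        have hv : v = wVarQ n c k := Fin.ext (by simp only [wVarQ, Fin.val_mk, hk]; omega)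
        have hphi : phi2 n c Q (X v) = rename some (Q k) := by
          unfold phi2; rw [aeval_X, dif_neg h0, dif_neg h1]
        rw [hphi, rename_rename]
        have hcm : optm ∘ some = wVarX n c := rfl
        rw [hcm]
        show Ideal.Quotient.mk J ((rename (wVarX n c)) (Q k)) =
          Ideal.Quotient.mk J (X (wVar0 n c) * X v)
        rw [Ideal.Quotient.eq]
        have hsub : (rename (wVarX n c)) (Q k) - X (wVar0 n c) * X v = -(fq n c Q k) := by
          rw [hv, fq]; ring
        rw [hsub]
        exact neg_mem (Ideal.subset_span ⟨k, k.isLt, rfl⟩)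
  have h5 := AlgHom.congr_fun hcomp g
  simp only [AlgHom.comp_apply] at h5
  rw [hg0, map_zero, map_zero] at h5
  have h6 : aeval (fun v : Fin (n + c + 1) => X (wVar0 n c) * X v) g =
      X (wVar0 n c) ^ i * g := aux_aeval_scale _ hgh
  rw [h6] at h5
  exact (Ideal.Quotient.eq_zero_iff_mem).mp
    (show Ideal.Quotient.mk J (X (wVar0 n c) ^ i * g) = 0 from h5.symm)

end Main

/-- (Theorem 4.8, (3) ⇒ (1)) If `(Q_1, …, Q_c)` is a regular sequence in `ℂ[x_1, …, x_n]`,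
then `I = ker φ` equals the ideal `(f_1, …, f_c)`; in particular `M(F) ⊂ ℙ^{n+c}` is a
complete intersection of codimension `c`. -/
theorem euler_symmetric_complete_intersection_of_regular_sequence
    (n c : ℕ) (hn : 1 ≤ n) (hc : 1 ≤ c)
    (Q : Fin c → MvPolynomial (Fin n) ℂ)
    (hhom : ∀ j, (Q j).IsHomogeneous 2)
    (hli : LinearIndependent ℂ Q)
    (hreg : RingTheory.Sequence.IsWeaklyRegular (MvPolynomial (Fin n) ℂ) (List.ofFn Q)) :
    RingHom.ker (phi2 n c Q) = Ideal.span (Set.range (fq n c Q)) := by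
  have hrange : Ideal.span (Set.range (fq n c Q)) = KF Q c := by
    unfold KF
    congr 1
    ext a
    constructor
    · rintro ⟨j, rfl⟩; exact ⟨j, j.isLt, rfl⟩
    · rintro ⟨k, _, rfl⟩; exact ⟨k, rfl⟩
  refine le_antisymm ?_ ?_
  · -- the hard inclusion `ker φ ≤ (f_1, …, f_c)`
    intro g hg
    rw [RingHom.mem_ker] at hg
    rw [hrange]
    have hpow : ∀ (m : ℕ) (h : S2 n c), X (wVar0 n c) ^ m * h ∈ KF Q c → h ∈ KF Q c := by
      intro m
      induction m with
      | zero => intro h hh; simpa using hh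
      | succ m ihm =>
        intro h hh
        have h2 : X (wVar0 n c) ^ m * (X (wVar0 n c) * h) ∈ KF Q c := by
          rw [show X (wVar0 n c) ^ m * (X (wVar0 n c) * h)
              = X (wVar0 n c) ^ (m + 1) * h by ring]
          exact hh
        exact X0_reg Q hreg c le_rfl h (ihm _ h2)
    rw [← sum_homogeneousComponent g]
    refine Ideal.sum_mem _ fun i hi => ?_
    -- each `φ`-image of a homogeneous component vanishes
    have hterm : ∀ d, (phi2 n c Q (homogeneousComponent d g)).IsHomogeneous (2 * d) := by
      intro d
      have hvals : ∀ v : Fin (n + c + 1), ((fun v : Fin (n + c + 1) =>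
          if h0 : (v : ℕ) = 0 then (X none : MvPolynomial (Option (Fin n)) ℂ) ^ 2
          else if h : (v : ℕ) ≤ n then X none * X (some ⟨(v : ℕ) - 1, by omega⟩)
          else rename some (Q ⟨(v : ℕ) - (n + 1), by have := v.isLt; omega⟩)) v).IsHomogeneous 2 := by
        intro v
        dsimp only
        by_cases h0 : (v : ℕ) = 0
        · rw [dif_pos h0]; exact isHomogeneous_X_pow _ _
        · by_cases h1 : (v : ℕ) ≤ n
          · rw [dif_neg h0, dif_pos h1]
            exact (isHomogeneous_X _ _).mul (isHomogeneous_X _ _)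
          · rw [dif_neg h0, dif_neg h1]
            exact (hhom _).rename_isHomogeneous
      exact (homogeneousComponent_isHomogeneous d g).aeval _ hvals
    have hcomp0 : phi2 n c Q (homogeneousComponent i g) = 0 := by
      have hsum : ∑ d ∈ Finset.range (g.totalDegree + 1),
          phi2 n c Q (homogeneousComponent d g) = 0 := by
        rw [← map_sum, sum_homogeneousComponent, hg]
      have hext := congrArg (homogeneousComponent (2 * i)) hsum
      rw [map_sum, map_zero] at hext
      rw [Finset.sum_eq_single_of_mem i hi (fun d _ hd => by
        rw [homogeneousComponent_of_mem (hterm d), if_neg (by omega)])] at hext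
      rw [homogeneousComponent_of_mem (hterm i), if_pos rfl] at hext
      exact hext
    exact hpow i _ (X0_pow_mem Q i _ (homogeneousComponent_isHomogeneous i g) hcomp0)
  · -- the easy inclusion `(f_1, …, f_c) ≤ ker φ`
    rw [Ideal.span_le]
    rintro a ⟨j, rfl⟩
    rw [SetLike.mem_coe, RingHom.mem_ker]
    exact phi2_fq Q hhom j
end
end
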